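/- arXiv:2601.03126 — 7 statements merged into one kernel-verified Lean document; each statement's English description precedes it below -/
import Mathlib

section
/- Let A be a finite abelian group with subgroups H, K ⊆ A such that A is the internal direct sum of H and K (H ∩ K = 0 and H + K = A). Then there exists a symmetric duality φ of A such that K = 𝔏_φ(H) = ℜ_φ(H) and H = 𝔏_φ(K) = ℜ_φ(K). -/
open AddChar Circle Function
open scoped DirectSum

/-- A duality of a finite abelian group `A`: a group isomorphism from `A` to its
character group `Â = AddChar A ℂˣ`, encoded as a bijective map respecting the operations. -/
def IsDuality {A : Type*} [AddCommGroup A] (φ : A → AddChar A ℂˣ) : Prop :=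
  Function.Bijective φ ∧ ∀ a b : A, φ (a + b) = φ a * φ b

/-- The left dual of a set `S ⊆ A`: all `x` with `Φ(x,h) = φ(x)(h) = 1` for all `h ∈ S`. -/
def lDual {A : Type*} [AddCommGroup A] (φ : A → AddChar A ℂˣ) (S : Set A) : Set A :=
  {x | ∀ h ∈ S, φ x h = 1}

/-- The right dual of a set `S ⊆ A`: all `x` with `Φ(h,x) = φ(h)(x) = 1` for all `h ∈ S`. -/
def rDual {A : Type*} [AddCommGroup A] (φ : A → AddChar A ℂˣ) (S : Set A) : Set A :=
  {x | ∀ h ∈ S, φ h x = 1}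

private lemma myZmodComm (n : ℕ) [NeZero n] (x y : ZMod n) :
    AddChar.zmod n x y = AddChar.zmod n y x := by
  obtain ⟨x, rfl⟩ := ZMod.intCast_surjective x
  obtain ⟨y, rfl⟩ := ZMod.intCast_surjective y
  simp [mul_comm]

private lemma myDirectSumApply {ι : Type} [DecidableEq ι] [Fintype ι] {G : ι → Type*}
    [∀ i, AddCommGroup (G i)] {R : Type*} [CommMonoid R] (ψ : ∀ i, AddChar (G i) R)
    (x : ⨁ i, G i) : AddChar.directSum ψ x = ∏ i, ψ i (x i) := by
  induction x using DirectSum.induction_on with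
  | zero => simp
  | of i c =>
      rw [Fintype.prod_eq_single i (fun j hj => ?_)]
      · simp [AddChar.directSum]
      · rw [DirectSum.of_eq_of_ne _ _ _ hj]; simp
  | add x y hx hy =>
      simp [map_add_eq_mul, hx, hy, Finset.prod_mul_distrib, DirectSum.add_apply]

/-- The equivalence between `ℂˣ`-valued and `ℂ`-valued additive characters. -/
private noncomputable def myUnitsEquiv (G : Type*) [AddCommGroup G] :
    AddChar G ℂˣ ≃ AddChar G ℂ where
  toFun ψ := (Units.coeHom ℂ).compAddChar ψ
  invFun ψ :=
    { toFun := fun a ↦ Units.mk (ψ a) (ψ (-a))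
        (by rw [← AddChar.map_add_eq_mul]; simp)
        (by rw [← AddChar.map_add_eq_mul]; simp)
      map_zero_eq_one' := by ext; simp
      map_add_eq_mul' := fun a b ↦ by ext; simp [AddChar.map_add_eq_mul] }
  left_inv ψ := by ext a; rfl
  right_inv ψ := by ext a; rfl

/-- Every finite abelian group admits a symmetric duality. -/
private lemma exists_symm_duality (G : Type*) [AddCommGroup G] [Fintype G] :
    ∃ φ : G → AddChar G ℂˣ, IsDuality φ ∧ ∀ a b : G, φ a b = φ b a := by
  classical
  obtain ⟨ι, _, n, hn, ⟨e⟩⟩ := AddCommGroup.equiv_directSum_zmod_of_finite' G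
  have hnz : ∀ i, NeZero (n i) := fun i ↦ ⟨by have := hn i; omega⟩
  let cu : Circle →* ℂˣ := (Units.map Circle.coeHom).comp toUnits.toMonoidHom
  have cu_inj : Function.Injective cu := by
    intro x y h
    have : (cu x : ℂ) = (cu y : ℂ) := by rw [h]
    exact Subtype.ext this
  let φ : G → AddChar G ℂˣ := fun a ↦
    cu.compAddChar ((AddChar.directSum fun i ↦ AddChar.zmod (n i) (e a i)).compAddMonoidHom
      e.toAddMonoidHom)
  have hφ : ∀ a b : G, φ a b = cu (∏ i, AddChar.zmod (n i) (e a i) (e b i)) := by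
    intro a b
    simp only [φ, MonoidHom.coe_compAddChar, Function.comp_apply, AddChar.compAddMonoidHom_apply,
      AddEquiv.coe_toAddMonoidHom, myDirectSumApply]
  have hadd : ∀ a b : G, φ (a + b) = φ a * φ b := by
    intro a b
    ext x
    have key : ∀ i : ι, AddChar.zmod (n i) (e (a + b) i) (e x i)
        = AddChar.zmod (n i) (e a i) (e x i) * AddChar.zmod (n i) (e b i) (e x i) := by
      intro i
      rw [map_add, DirectSum.add_apply, AddChar.zmod_add, AddChar.mul_apply]
    simp only [AddChar.mul_apply]
    rw [hφ, hφ, hφ, ← map_mul, ← Finset.prod_mul_distrib]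
    exact congrArg (fun z ↦ (cu z : ℂ)) (Finset.prod_congr rfl fun i _ ↦ key i)
  have hsymm : ∀ a b : G, φ a b = φ b a := by
    intro a b
    rw [hφ, hφ]
    congr 1
    exact Finset.prod_congr rfl fun i _ ↦ myZmodComm _ _ _
  have hinj : Function.Injective φ := by
    intro a b h
    have hB : ∀ x, (AddChar.directSum fun i ↦ AddChar.zmod (n i) (e a i)) x
        = (AddChar.directSum fun i ↦ AddChar.zmod (n i) (e b i)) x := by
      intro x
      obtain ⟨y, rfl⟩ := e.surjective x
      have := DFunLike.congr_fun h y
      rw [hφ, hφ] at this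
      have := cu_inj this
      rw [myDirectSumApply, myDirectSumApply]
      simpa [myDirectSumApply] using this
    have : (fun i ↦ AddChar.zmod (n i) (e a i)) = fun i ↦ AddChar.zmod (n i) (e b i) :=
      AddChar.directSum_injective (DFunLike.ext _ _ hB)
    have : e a = e b := DFinsupp.ext fun i ↦ AddChar.zmod_injective (congr_fun this i)
    exact e.injective this
  refine ⟨φ, ⟨?_, hadd⟩, hsymm⟩
  have hbij : Function.Bijective ((myUnitsEquiv G) ∘ φ) := by
    rw [Fintype.bijective_iff_injective_and_card]
    exact ⟨(myUnitsEquiv G).injective.comp hinj, (AddChar.card_eq).symm⟩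
  exact (Equiv.comp_bijective φ (myUnitsEquiv G)).mp hbij

/-- If `A = H ⊕ K` internally, there is a symmetric duality for which `H` and `K` are
each other's left and right duals. -/
theorem direct_sum_duals {A : Type*} [AddCommGroup A] [Fintype A]
    (H K : AddSubgroup A) (hd : H ⊓ K = ⊥) (hs : H ⊔ K = ⊤) :
    ∃ φ : A → AddChar A ℂˣ, IsDuality φ ∧ (∀ a b : A, φ a b = φ b a) ∧
      (K : Set A) = lDual φ (H : Set A) ∧ (K : Set A) = rDual φ (H : Set A) ∧
      (H : Set A) = lDual φ (K : Set A) ∧ (H : Set A) = rDual φ (K : Set A) := by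
  classical
  have fH : Fintype H := Fintype.ofFinite _
  have fK : Fintype K := Fintype.ofFinite _
  obtain ⟨φH, ⟨hHbij, hHadd⟩, hHsymm⟩ := exists_symm_duality H
  obtain ⟨φK, ⟨hKbij, hKadd⟩, hKsymm⟩ := exists_symm_duality K
  have hH0 : φH 0 = 1 := by
    have h := hHadd 0 0
    rw [add_zero] at h
    refine DFunLike.ext _ _ fun x ↦ ?_
    have hx := DFunLike.congr_fun h x
    rw [AddChar.mul_apply] at hx
    rw [AddChar.one_apply]
    exact left_eq_mul.mp hx
  have hK0 : φK 0 = 1 := by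
    have h := hKadd 0 0
    rw [add_zero] at h
    refine DFunLike.ext _ _ fun x ↦ ?_
    have hx := DFunLike.congr_fun h x
    rw [AddChar.mul_apply] at hx
    rw [AddChar.one_apply]
    exact left_eq_mul.mp hx
  have hc : IsCompl (AddSubgroup.toIntSubmodule H) (AddSubgroup.toIntSubmodule K) := by
    constructor
    · rw [disjoint_iff, ← AddSubgroup.toIntSubmodule.map_inf, hd]
      exact AddSubgroup.toIntSubmodule.map_bot
    · rw [codisjoint_iff, ← map_sup AddSubgroup.toIntSubmodule H K, hs]
      exact AddSubgroup.toIntSubmodule.map_top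
  let E : (H × K) ≃+ A := (Submodule.prodEquivOfIsCompl _ _ hc).toAddEquiv
  have hmemK : ∀ x : A, (E.symm x).1 = 0 ↔ x ∈ K := fun x ↦
    Submodule.prodEquivOfIsCompl_symm_apply_fst_eq_zero _ _ hc
  have hmemH : ∀ x : A, (E.symm x).2 = 0 ↔ x ∈ H := fun x ↦
    Submodule.prodEquivOfIsCompl_symm_apply_snd_eq_zero _ _ hc
  have hπH : ∀ h : H, E.symm (h : A) = (⟨h.1, h.2⟩, 0) := fun h ↦
    Submodule.prodEquivOfIsCompl_symm_apply_left _ _ hc ⟨h.1, h.2⟩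
  have hπK : ∀ k : K, E.symm (k : A) = (0, ⟨k.1, k.2⟩) := fun k ↦
    Submodule.prodEquivOfIsCompl_symm_apply_right _ _ hc ⟨k.1, k.2⟩
  have hEsurj : ∀ p : (AddSubgroup.toIntSubmodule H) × (AddSubgroup.toIntSubmodule K),
      ∃ a : A, E.symm a = p := fun p ↦ ⟨E p, E.symm_apply_apply p⟩
  let Φ : A → A → ℂˣ := fun a x ↦ φH (E.symm a).1 (E.symm x).1 * φK (E.symm a).2 (E.symm x).2
  have hΦadd2 : ∀ a x y : A, Φ a (x + y) = Φ a x * Φ a y := by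
    intro a x y
    show φH (E.symm a).1 (E.symm (x + y)).1 * φK (E.symm a).2 (E.symm (x + y)).2 = _
    rw [map_add, Prod.fst_add, Prod.snd_add, AddChar.map_add_eq_mul, AddChar.map_add_eq_mul]
    exact mul_mul_mul_comm _ _ _ _
  have hΦzero2 : ∀ a : A, Φ a 0 = 1 := by
    intro a
    show φH (E.symm a).1 (E.symm 0).1 * φK (E.symm a).2 (E.symm 0).2 = 1
    rw [map_zero]
    simp [AddChar.map_zero_eq_one]
  let φ : A → AddChar A ℂˣ := fun a ↦
    { toFun := Φ a
      map_zero_eq_one' := hΦzero2 a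
      map_add_eq_mul' := hΦadd2 a }
  have hφ : ∀ a x : A, φ a x = Φ a x := fun a x ↦ rfl
  have hadd : ∀ a b : A, φ (a + b) = φ a * φ b := by
    intro a b
    refine DFunLike.ext _ _ fun x ↦ ?_
    rw [AddChar.mul_apply, hφ, hφ, hφ]
    show φH (E.symm (a + b)).1 (E.symm x).1 * φK (E.symm (a + b)).2 (E.symm x).2 = _
    rw [map_add, Prod.fst_add, Prod.snd_add, hHadd, hKadd, AddChar.mul_apply, AddChar.mul_apply]
    exact mul_mul_mul_comm _ _ _ _
  have hsymm : ∀ a b : A, φ a b = φ b a := by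
    intro a b
    rw [hφ, hφ]
    show φH (E.symm a).1 (E.symm b).1 * φK (E.symm a).2 (E.symm b).2 = _
    rw [hHsymm, hKsymm]
  have hinj : Function.Injective φ := by
    intro a b hab
    have h1 : (E.symm a).1 = (E.symm b).1 := by
      apply hHbij.1
      refine DFunLike.ext _ _ fun h ↦ ?_
      obtain ⟨x, hx⟩ := hEsurj (⟨h.1, h.2⟩, 0)
      have hx2 := DFunLike.congr_fun hab x
      rw [hφ, hφ] at hx2
      show φH (E.symm a).1 h = φH (E.symm b).1 h
      have e1 : Φ a x = φH (E.symm a).1 h := by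
        show φH (E.symm a).1 (E.symm x).1 * φK (E.symm a).2 (E.symm x).2 = _
        rw [hx]
        show φH (E.symm a).1 h * φK (E.symm a).2 (0 : K) = _
        simp [AddChar.map_zero_eq_one]
      have e2 : Φ b x = φH (E.symm b).1 h := by
        show φH (E.symm b).1 (E.symm x).1 * φK (E.symm b).2 (E.symm x).2 = _
        rw [hx]
        show φH (E.symm b).1 h * φK (E.symm b).2 (0 : K) = _
        simp [AddChar.map_zero_eq_one]
      rw [← e1, ← e2]
      exact hx2
    have h2 : (E.symm a).2 = (E.symm b).2 := by
      apply hKbij.1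
      refine DFunLike.ext _ _ fun k ↦ ?_
      obtain ⟨x, hx⟩ := hEsurj (0, ⟨k.1, k.2⟩)
      have hx2 := DFunLike.congr_fun hab x
      rw [hφ, hφ] at hx2
      show φK (E.symm a).2 k = φK (E.symm b).2 k
      have e1 : Φ a x = φK (E.symm a).2 k := by
        show φH (E.symm a).1 (E.symm x).1 * φK (E.symm a).2 (E.symm x).2 = _
        rw [hx]
        show φH (E.symm a).1 (0 : H) * φK (E.symm a).2 k = _
        simp [AddChar.map_zero_eq_one]
      have e2 : Φ b x = φK (E.symm b).2 k := by
        show φH (E.symm b).1 (E.symm x).1 * φK (E.symm b).2 (E.symm x).2 = _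
        rw [hx]
        show φH (E.symm b).1 (0 : H) * φK (E.symm b).2 k = _
        simp [AddChar.map_zero_eq_one]
      rw [← e1, ← e2]
      exact hx2
    have : E.symm a = E.symm b := Prod.ext h1 h2
    exact E.symm.injective this
  have hbij : Function.Bijective φ := by
    have hbij' : Function.Bijective ((myUnitsEquiv A) ∘ φ) := by
      rw [Fintype.bijective_iff_injective_and_card]
      exact ⟨(myUnitsEquiv A).injective.comp hinj, (AddChar.card_eq).symm⟩
    exact (Equiv.comp_bijective φ (myUnitsEquiv A)).mp hbij'
  have hKl : (K : Set A) = lDual φ (H : Set A) := by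
    ext x
    simp only [SetLike.mem_coe, lDual, Set.mem_setOf_eq]
    constructor
    · intro hx h hh
      rw [hφ]
      show φH (E.symm x).1 (E.symm h).1 * φK (E.symm x).2 (E.symm h).2 = 1
      rw [(hmemK x).2 hx, hπH ⟨h, hh⟩, hH0]
      simp [AddChar.map_zero_eq_one]
    · intro hx
      apply (hmemK x).1
      apply hHbij.1
      rw [hH0]
      refine DFunLike.ext _ _ fun h ↦ ?_
      have hx2 := hx (h : A) h.2
      rw [hφ] at hx2
      have hx3 : φH (E.symm x).1 (E.symm (h : A)).1 * φK (E.symm x).2 (E.symm (h : A)).2 = 1 := hx2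
      rw [hπH h] at hx3
      simp only [AddChar.map_zero_eq_one, mul_one] at hx3
      rw [AddChar.one_apply]
      exact hx3
  have hHl : (H : Set A) = lDual φ (K : Set A) := by
    ext x
    simp only [SetLike.mem_coe, lDual, Set.mem_setOf_eq]
    constructor
    · intro hx k hk
      rw [hφ]
      show φH (E.symm x).1 (E.symm k).1 * φK (E.symm x).2 (E.symm k).2 = 1
      rw [(hmemH x).2 hx, hπK ⟨k, hk⟩, hK0]
      simp [AddChar.map_zero_eq_one]
    · intro hx
      apply (hmemH x).1
      apply hKbij.1
      rw [hK0]
      refine DFunLike.ext _ _ fun k ↦ ?_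
      have hx2 := hx (k : A) k.2
      rw [hφ] at hx2
      have hx3 : φH (E.symm x).1 (E.symm (k : A)).1 * φK (E.symm x).2 (E.symm (k : A)).2 = 1 := hx2
      rw [hπK k] at hx3
      simp only [AddChar.map_zero_eq_one, one_mul] at hx3
      rw [AddChar.one_apply]
      exact hx3
  have hlr : ∀ S : Set A, lDual φ S = rDual φ S := by
    intro S
    ext x
    simp only [lDual, rDual, Set.mem_setOf_eq]
    exact ⟨fun hx h hh ↦ (hsymm x h) ▸ hx h hh, fun hx h hh ↦ (hsymm h x) ▸ hx h hh⟩
  exact ⟨φ, ⟨hbij, hadd⟩, hsymm, hKl, (hlr _) ▸ hKl, hHl, (hlr _) ▸ hHl⟩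
end

section
/- Let p be a prime, k a natural number, and A = ℤ/p^kℤ. Suppose H, K ⊆ A are subgroups satisfying |H| · |K| = |A| = p^k. Then for every duality φ of A one has 𝔏_φ(H) = ℜ_φ(H) = K and 𝔏_φ(K) = ℜ_φ(K) = H. -/
open Complex in
private lemma aux_main {p : ℕ} (hp : p.Prime) (k : ℕ)
    (H K : AddSubgroup (ZMod (p ^ k))) (hsize : Nat.card H * Nat.card K = p ^ k)
    (φ : ZMod (p ^ k) → AddChar (ZMod (p ^ k)) ℂˣ) (hφ : IsDuality φ) :
    lDual φ (H : Set (ZMod (p ^ k))) = (K : Set (ZMod (p ^ k))) ∧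
    rDual φ (H : Set (ZMod (p ^ k))) = (K : Set (ZMod (p ^ k))) := by
  haveI : NeZero (p ^ k) := ⟨pow_ne_zero k hp.pos.ne'⟩
  -- basic properties of the duality
  have φ0 : φ 0 = 1 := by
    have h : φ 0 = φ 0 * φ 0 := by rw [← hφ.2]; norm_num
    refine DFunLike.ext _ _ fun a => ?_
    have h' := DFunLike.congr_fun h a
    rw [AddChar.mul_apply] at h'
    rw [AddChar.one_apply]
    exact left_eq_mul.mp h'
  have φpow : ∀ (n : ℕ) (x : ZMod (p ^ k)), φ (n • x) = φ x ^ n := by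
    intro n x
    induction n with
    | zero => simpa using φ0
    | succ n ih => rw [succ_nsmul, hφ.2, ih, pow_succ]
  have φswap : ∀ (n : ℕ) (x y : ZMod (p ^ k)), φ (n • x) y = φ x (n • y) := by
    intro n x y
    rw [φpow, AddChar.pow_apply, ← AddChar.map_nsmul_eq_pow]
  have φeq1 : ∀ z, φ z = 1 ↔ z = 0 :=
    fun z => ⟨fun h => hφ.1.1 (h.trans φ0.symm), fun h => h ▸ φ0⟩
  -- nondegeneracy on the right
  have nondeg : ∀ z, (∀ y, φ y z = 1) → z = 0 := by
    intro z hz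
    have hζ := Complex.isPrimitiveRoot_exp (p ^ k) (NeZero.ne _)
    have hu := hζ.isUnit_unit (NeZero.ne (p ^ k))
    obtain ⟨y0, hy0⟩ := hφ.1.2 (AddChar.zmodChar (p ^ k) hu.pow_eq_one)
    have h1 : AddChar.zmodChar (p ^ k) hu.pow_eq_one z = 1 := by rw [← hy0]; exact hz y0
    rw [AddChar.zmodChar_apply, hu.pow_eq_one_iff_dvd] at h1
    have := Nat.eq_zero_of_dvd_of_lt h1 (ZMod.val_lt z)
    · exact (ZMod.val_eq_zero z).mp this
  -- subgroup classification
  have μdef : ∀ (m : ℕ) (x : ZMod (p ^ k)), AddMonoidHom.mulLeft ((p ^ m : ℕ) : ZMod (p ^ k)) x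
      = ((p ^ m : ℕ) : ZMod (p ^ k)) * x := fun _ _ => rfl
  have kerRange : ∀ m ≤ k, (AddMonoidHom.mulLeft ((p ^ m : ℕ) : ZMod (p ^ k))).ker
      = (AddMonoidHom.mulLeft ((p ^ (k - m) : ℕ) : ZMod (p ^ k))).range := by
    intro m hm
    ext x
    rw [AddMonoidHom.mem_ker, AddMonoidHom.mem_range]
    constructor
    · intro hx
      rw [μdef] at hx
      have hx' : ((p ^ m * x.val : ℕ) : ZMod (p ^ k)) = 0 := by
        rw [Nat.cast_mul, ZMod.natCast_val, ZMod.cast_id]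
        exact hx
      rw [ZMod.natCast_eq_zero_iff] at hx'
      have hdvd : p ^ (k - m) ∣ x.val := by
        have h2 : p ^ m * p ^ (k - m) ∣ p ^ m * x.val := by
          rwa [← pow_add, Nat.add_sub_cancel' hm]
        exact (mul_dvd_mul_iff_left (pow_pos hp.pos m).ne').mp h2
      obtain ⟨c, hc⟩ := hdvd
      refine ⟨(c : ZMod (p ^ k)), ?_⟩
      rw [μdef, ← Nat.cast_mul, ← hc, ZMod.natCast_val, ZMod.cast_id]
    · rintro ⟨y, rfl⟩
      rw [μdef, μdef, ← mul_assoc, ← Nat.cast_mul, ← pow_add, Nat.add_sub_cancel' hm,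
        ZMod.natCast_self, zero_mul]
  have hle : ∀ (S : AddSubgroup (ZMod (p ^ k))) (m : ℕ), Nat.card S = p ^ m →
      S ≤ (AddMonoidHom.mulLeft ((p ^ m : ℕ) : ZMod (p ^ k))).ker := by
    intro S m hS x hx
    have h1 : addOrderOf (⟨x, hx⟩ : S) ∣ p ^ m := hS ▸ addOrderOf_dvd_natCard _
    have h2 : (p ^ m) • (⟨x, hx⟩ : S) = 0 := addOrderOf_dvd_iff_nsmul_eq_zero.mp h1
    have h3 : (p ^ m) • x = 0 := by
      have := congrArg (Subtype.val) h2
      simpa using this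
    rw [AddMonoidHom.mem_ker, μdef, ← nsmul_eq_mul]
    exact_mod_cast h3
  have hiso : ∀ m : ℕ, Nat.card ((AddMonoidHom.mulLeft ((p ^ m : ℕ) : ZMod (p ^ k))).ker)
      * Nat.card ((AddMonoidHom.mulLeft ((p ^ m : ℕ) : ZMod (p ^ k))).range) = p ^ k := by
    intro m
    have h1 := AddSubgroup.card_eq_card_quotient_mul_card_addSubgroup
      (AddMonoidHom.mulLeft ((p ^ m : ℕ) : ZMod (p ^ k))).ker
    rw [Nat.card_zmod] at h1
    rw [← Nat.card_congr (QuotientAddGroup.quotientKerEquivRange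
      (AddMonoidHom.mulLeft ((p ^ m : ℕ) : ZMod (p ^ k)))).toEquiv, mul_comm, ← h1]
  -- get the exponents
  have hdvdH : Nat.card H ∣ p ^ k := ⟨Nat.card K, hsize.symm⟩
  obtain ⟨i, hik, hcardH⟩ := (Nat.dvd_prime_pow hp).mp hdvdH
  have hcardK : Nat.card K = p ^ (k - i) := by
    have h1 : Nat.card H * Nat.card K = Nat.card H * p ^ (k - i) := by
      rw [hsize, hcardH, ← pow_add, Nat.add_sub_cancel' hik]
    exact Nat.eq_of_mul_eq_mul_left Nat.card_pos h1
  set A := (AddMonoidHom.mulLeft ((p ^ i : ℕ) : ZMod (p ^ k))).ker with hA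
  set B := (AddMonoidHom.mulLeft ((p ^ (k - i) : ℕ) : ZMod (p ^ k))).ker with hB
  have hBrange : B = (AddMonoidHom.mulLeft ((p ^ i : ℕ) : ZMod (p ^ k))).range := by
    rw [hB, kerRange (k - i) (Nat.sub_le k i), Nat.sub_sub_self hik]
  have hcardAB : Nat.card A * Nat.card B = p ^ k := by rw [hBrange]; exact hiso i
  have hHA : H ≤ A := hle H i hcardH
  have hKB : K ≤ B := hle K (k - i) hcardK
  have hposK : 0 < Nat.card K := Nat.card_pos
  have hposB : 0 < Nat.card B := Nat.card_pos
  have hcardHA : Nat.card A ≤ Nat.card H := by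
    have h1 : Nat.card A * Nat.card K ≤ Nat.card H * Nat.card K := by
      calc Nat.card A * Nat.card K ≤ Nat.card A * Nat.card B :=
            Nat.mul_le_mul_left _ (AddSubgroup.card_le_of_le hKB)
        _ = Nat.card H * Nat.card K := by rw [hcardAB, hsize]
    exact Nat.le_of_mul_le_mul_right h1 hposK
  have hHeq : H = A := AddSubgroup.eq_of_le_of_card_ge hHA hcardHA
  have hcardKB : Nat.card B ≤ Nat.card K := by
    have h1 : Nat.card A * Nat.card B ≤ Nat.card A * Nat.card K := by
      calc Nat.card A * Nat.card B = Nat.card H * Nat.card K := by rw [hcardAB, hsize]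
        _ ≤ Nat.card A * Nat.card K :=
            Nat.mul_le_mul_right _ (AddSubgroup.card_le_of_le hHA)
    exact Nat.le_of_mul_le_mul_left h1 Nat.card_pos
  have hKeq : K = B := AddSubgroup.eq_of_le_of_card_ge hKB hcardKB
  -- now compute the duals
  have hmemH : ∀ x, x ∈ H ↔ ∃ y, ((p ^ (k - i) : ℕ) : ZMod (p ^ k)) * y = x := by
    intro x
    rw [hHeq, hA, kerRange i hik, AddMonoidHom.mem_range]
    exact Iff.rfl
  have hmemK : ∀ x : ZMod (p ^ k), x ∈ K ↔ (p ^ (k - i) : ℕ) • x = 0 := by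
    intro x
    rw [hKeq, hB, AddMonoidHom.mem_ker, μdef, ← nsmul_eq_mul]
  have hswap' : ∀ x y : ZMod (p ^ k),
      φ x (((p ^ (k - i) : ℕ) : ZMod (p ^ k)) * y) = φ ((p ^ (k - i) : ℕ) • x) y := by
    intro x y
    rw [φswap, nsmul_eq_mul]
  constructor
  · ext x
    simp only [lDual, Set.mem_setOf_eq, SetLike.mem_coe]
    constructor
    · intro hx
      rw [hmemK]
      apply (φeq1 _).mp
      refine DFunLike.ext _ _ fun y => ?_
      rw [AddChar.one_apply, ← hswap']
      exact hx _ ((hmemH _).mpr ⟨y, rfl⟩)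
    · intro hx h hh
      obtain ⟨y, rfl⟩ := (hmemH h).mp hh
      rw [hswap', (hmemK x).mp hx, φ0, AddChar.one_apply]
  · ext x
    simp only [rDual, Set.mem_setOf_eq, SetLike.mem_coe]
    constructor
    · intro hx
      rw [hmemK]
      apply nondeg
      intro y
      rw [← φswap]
      exact hx _ ((hmemH _).mpr ⟨y, (nsmul_eq_mul _ _).symm⟩)
    · intro hx h hh
      obtain ⟨y, rfl⟩ := (hmemH h).mp hh
      rw [← nsmul_eq_mul, φswap, (hmemK x).mp hx, AddChar.map_zero_eq_one]

/-- In `ℤ/p^kℤ`, any two subgroups satisfying the size condition are each other's left and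
right duals for every duality. -/
theorem cyclic_p_group_duals {p : ℕ} (hp : p.Prime) (k : ℕ)
    (H K : AddSubgroup (ZMod (p ^ k))) (hsize : Nat.card H * Nat.card K = p ^ k) :
    ∀ φ : ZMod (p ^ k) → AddChar (ZMod (p ^ k)) ℂˣ, IsDuality φ →
      lDual φ (H : Set (ZMod (p ^ k))) = (K : Set (ZMod (p ^ k))) ∧
      rDual φ (H : Set (ZMod (p ^ k))) = (K : Set (ZMod (p ^ k))) ∧
      lDual φ (K : Set (ZMod (p ^ k))) = (H : Set (ZMod (p ^ k))) ∧
      rDual φ (K : Set (ZMod (p ^ k))) = (H : Set (ZMod (p ^ k))) := by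
  intro φ hφ
  obtain ⟨h1, h2⟩ := aux_main hp k H K hsize φ hφ
  obtain ⟨h3, h4⟩ := aux_main hp k K H (by rw [mul_comm]; exact hsize) φ hφ
  exact ⟨h1, h2, h3, h4⟩
end

section
/- Let p be a prime and let A be a finite elementary abelian p-group (i.e., a finite abelian group with p • a = 0 for all a ∈ A). Suppose H, K ⊆ A are subgroups satisfying |H| · |K| = |A|. Then there exists a symmetric duality φ of A such that 𝔏_φ(H) = ℜ_φ(H) = K and 𝔏_φ(K) = ℜ_φ(K) = H. -/
open Module Submodule Function Set in
/-- Key linear-algebra construction: a symmetric bilinear form adapted to a pair of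
subspaces of complementary dimension. -/
theorem exists_good_bilinear {k : Type*} [Field k] {V : Type*} [AddCommGroup V]
    [Module k V] [Finite V] (H' K' : Submodule k V)
    (hdim : finrank k H' + finrank k K' = finrank k V) :
    ∃ B : V →ₗ[k] V →ₗ[k] k,
      (∀ x y, B x y = B y x) ∧
      (∀ x, (∀ h ∈ H', B x h = 0) ↔ x ∈ K') ∧
      (∀ x, (∀ h ∈ K', B x h = 0) ↔ x ∈ H') ∧
      (∀ f : V →ₗ[k] k, ∃ x, B x = f) ∧
      (∀ x, (∀ y, B x y = 0) → x = 0) := by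
  classical
  have hfd : Module.Finite k V := Module.Finite.of_finite
  set W : Submodule k V := H' ⊓ K' with hW
  obtain ⟨sW, hsWsub, hsWspan, hsWli⟩ := exists_linearIndependent k (W : Set V)
  rw [Submodule.span_eq] at hsWspan
  obtain ⟨sH, hsHsub, hWH, hsHsp, hsHli⟩ :=
    exists_linearIndepOn_id_extension hsWli (hsWsub.trans (SetLike.coe_subset_coe.mpr inf_le_left))
  replace hsHli : LinearIndependent k ((↑) : sH → V) := hsHli
  have hspanH : span k sH = H' := le_antisymm (span_le.mpr hsHsub)
    (by rw [← Submodule.span_eq H']; exact span_le.mpr hsHsp)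
  obtain ⟨sHK, hsHKsub, hHHK, hsHKsp, hsHKli⟩ :=
    exists_linearIndepOn_id_extension hsHli (hsHsub.trans (subset_union_left (t := (K' : Set V))))
  replace hsHKli : LinearIndependent k ((↑) : sHK → V) := hsHKli
  have hspanHK : span k sHK = H' ⊔ K' := by
    apply le_antisymm
    · rw [span_le]
      intro x hx
      rcases hsHKsub hx with h | h
      · exact le_sup_left (α := Submodule k V) h
      · exact le_sup_right (α := Submodule k V) h
    · exact sup_le (fun x hx => hsHKsp (Or.inl hx)) (fun x hx => hsHKsp (Or.inr hx))
  obtain ⟨sA, hsAsub, hHKA, hsAsp, hsAli⟩ :=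
    exists_linearIndepOn_id_extension hsHKli (subset_univ sHK)
  replace hsAli : LinearIndependent k ((↑) : sA → V) := hsAli
  have hspanA : span k sA = ⊤ := by
    rw [eq_top_iff]; exact fun x _ => hsAsp trivial
  -- the pieces
  set g : Set V := sHK \ sH with hg
  set z : Set V := sA \ sHK with hz
  have hWHK : sW ⊆ sHK := hWH.trans hHHK
  have hWA : sW ⊆ sA := hWHK.trans hHKA
  have hHA : sH ⊆ sA := hHHK.trans hHKA
  have hgA : g ⊆ sA := fun x hx => hHKA hx.1
  have hzA : z ⊆ sA := fun x hx => hx.1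
  have hgH : ∀ x ∈ g, x ∉ sH := fun x hx => hx.2
  have hzHK : ∀ x ∈ z, x ∉ sHK := fun x hx => hx.2
  -- g ⊆ K'
  have hgK : g ⊆ (K' : Set V) := by
    intro x hx
    rcases hsHKsub hx.1 with h | h
    · exfalso
      have hxsp : x ∈ span k sH := hspanH ▸ h
      have : x ∉ span k (Subtype.val '' {i : sHK | (i : V) ≠ x}) := by
        refine hsHKli.notMem_span_image (x := (⟨x, hx.1⟩ : sHK)) ?_
        simp
      apply this
      have himg : sH ⊆ Subtype.val '' {i : sHK | (i : V) ≠ x} := by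
        intro y hy
        exact ⟨⟨y, hHHK hy⟩, by rintro rfl; exact hx.2 hy, rfl⟩
      exact span_mono himg hxsp
    · exact h
  -- counting
  have hfinA : sA.Finite := toFinite sA
  have hfinHK : sHK.Finite := hfinA.subset hHKA
  have hfinH : sH.Finite := hfinHK.subset hHHK
  have hfinW : sW.Finite := hfinH.subset hWH
  have hfing : g.Finite := hfinHK.subset (fun x hx => hx.1)
  have hfinz : z.Finite := hfinA.subset hzA
  have hcard : ∀ (s : Set V), LinearIndependent k ((↑) : s → V) →
      finrank k (span k s) = s.ncard := by
    intro s hs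
    have hsf : s.Finite := toFinite s
    haveI : Fintype s := hsf.fintype
    rw [finrank_span_set_eq_card hs, ncard_eq_toFinset_card']
  have hcW : finrank k W = sW.ncard := by rw [← hsWspan]; exact hcard _ hsWli
  have hcH : finrank k H' = sH.ncard := by rw [← hspanH]; exact hcard _ hsHli
  have hcHK : finrank k (H' ⊔ K' : Submodule k V) = sHK.ncard := by
    rw [← hspanHK]; exact hcard _ hsHKli
  have hcA : finrank k V = sA.ncard := by
    have := hcard _ hsAli
    rwa [hspanA, finrank_top] at this
  have hsupinf := Submodule.finrank_sup_add_finrank_inf_eq H' K'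
  rw [← hW] at hsupinf
  have hgH' : g.ncard + sH.ncard = sHK.ncard := ncard_diff_add_ncard_of_subset hHHK hfinHK
  have hzHK' : z.ncard + sHK.ncard = sA.ncard := ncard_diff_add_ncard_of_subset hHKA hfinA
  have hzW : z.ncard = sW.ncard := by omega
  have hWgK : sW.ncard + g.ncard = finrank k K' := by omega
  -- span (sW ∪ g) = K'
  have hdisjWg : Disjoint sW g := by
    rw [Set.disjoint_left]; intro x hx hx'; exact hx'.2 (hWH hx)
  have hWgsub : sW ∪ g ⊆ (K' : Set V) := by
    refine union_subset ?_ hgK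
    intro x hx
    exact (inf_le_right : W ≤ K') (hsWsub hx)
  have hWgli : LinearIndependent k ((↑) : (sW ∪ g : Set V) → V) := by
    refine LinearIndepOn.mono (v := id) hsAli ?_
    exact union_subset hWA hgA
  have hspanWg : span k (sW ∪ g) = K' := by
    refine Submodule.eq_of_le_of_finrank_le (span_le.mpr hWgsub) ?_
    rw [hcard _ hWgli, ncard_union_eq hdisjWg hfinW hfing, hWgK]
  haveI : Fintype sA := (toFinite sA).fintype
  haveI : Fintype sW := (toFinite sW).fintype
  haveI : Fintype z := (toFinite z).fintype
  have e : sW ≃ z := by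
    apply Fintype.equivOfCardEq
    rw [← Nat.card_eq_fintype_card, ← Nat.card_eq_fintype_card,
      Nat.card_coe_set_eq, Nat.card_coe_set_eq, hzW]
  -- disjointness facts
  have hdisjWz : ∀ x ∈ sW, x ∉ z := fun x hx hx' => (hz ▸ hx').2 (hHHK (hWH hx))
  have hdisjHz : ∀ x ∈ sH, x ∉ z := fun x hx hx' => (hz ▸ hx').2 (hHHK hx)
  have hdisjgz : ∀ x ∈ g, x ∉ z := fun x hx hx' => (hz ▸ hx').2 (hg ▸ hx).1
  have hdisjgW : ∀ x ∈ g, x ∉ sW := fun x hx hx' => (hg ▸ hx).2 (hWH hx')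
  -- the basis
  set b : Basis sA k V := Basis.mk hsAli (by rw [Subtype.range_coe, hspanA])
  have hb : ∀ i : sA, b i = (i : V) := fun i => Basis.mk_apply _ _ _
  -- the involution
  set σ : sA → sA := fun i =>
    if h : (i : V) ∈ sW then ⟨(e ⟨i, h⟩ : V), hzA (e ⟨i, h⟩).2⟩
    else if h' : (i : V) ∈ z then ⟨(e.symm ⟨i, h'⟩ : V), hWA (e.symm ⟨i, h'⟩).2⟩
    else i with hσ
  have hσW : ∀ (i : sA) (h : (i : V) ∈ sW),
      σ i = ⟨(e ⟨i, h⟩ : V), hzA (e ⟨i, h⟩).2⟩ := by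
    intro i h; simp only [hσ, dif_pos h]
  have hσz : ∀ (i : sA) (h : (i : V) ∈ z),
      σ i = ⟨(e.symm ⟨i, h⟩ : V), hWA (e.symm ⟨i, h⟩).2⟩ := by
    intro i h
    have h2 : (i : V) ∉ sW := fun hw => hdisjWz _ hw h
    simp only [hσ, dif_neg h2, dif_pos h]
  have hσo : ∀ (i : sA), (i : V) ∉ sW → (i : V) ∉ z → σ i = i := by
    intro i h1 h2; simp only [hσ, dif_neg h1, dif_neg h2]
  have hσWz : ∀ (i : sA), (i : V) ∈ sW → ((σ i : V) ∈ z) := by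
    intro i h; rw [hσW i h]; exact (e ⟨i, h⟩).2
  have hσzW : ∀ (i : sA), (i : V) ∈ z → ((σ i : V) ∈ sW) := by
    intro i h; rw [hσz i h]; exact (e.symm ⟨i, h⟩).2
  have hσσ : ∀ i, σ (σ i) = i := by
    intro i
    by_cases h : (i : V) ∈ sW
    · rw [hσW i h]
      have hz1 : ((⟨(e ⟨i, h⟩ : V), hzA (e ⟨i, h⟩).2⟩ : sA) : V) ∈ z := (e ⟨i, h⟩).2
      rw [hσz _ hz1]
      apply Subtype.ext
      have : (⟨((⟨(e ⟨i, h⟩ : V), hzA (e ⟨i, h⟩).2⟩ : sA) : V), hz1⟩ : z) = e ⟨i, h⟩ :=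
        Subtype.ext rfl
      show (e.symm _ : V) = _
      rw [this, Equiv.symm_apply_apply]
    · by_cases h' : (i : V) ∈ z
      · rw [hσz i h']
        have hw1 : ((⟨(e.symm ⟨i, h'⟩ : V), hWA (e.symm ⟨i, h'⟩).2⟩ : sA) : V) ∈ sW :=
          (e.symm ⟨i, h'⟩).2
        rw [hσW _ hw1]
        apply Subtype.ext
        have : (⟨((⟨(e.symm ⟨i, h'⟩ : V), hWA (e.symm ⟨i, h'⟩).2⟩ : sA) : V), hw1⟩ : sW)
            = e.symm ⟨i, h'⟩ := Subtype.ext rfl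
        show (e _ : V) = _
        rw [this, Equiv.apply_symm_apply]
      · rw [hσo i h h', hσo i h h']
  -- disjointness
  have hdisjWz : ∀ x ∈ sW, x ∉ z := fun x hx hx' => (hz ▸ hx').2 (hHHK (hWH hx))
  have hdisjHz : ∀ x ∈ sH, x ∉ z := fun x hx hx' => (hz ▸ hx').2 (hHHK hx)
  have hdisjgz : ∀ x ∈ g, x ∉ z := fun x hx hx' => (hz ▸ hx').2 (hg ▸ hx).1
  have hdisjgW : ∀ x ∈ g, x ∉ sW := fun x hx hx' => (hg ▸ hx).2 (hWH hx')
  have hdisjgH : ∀ x ∈ g, x ∉ sH := fun x hx => (hg ▸ hx).2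
  have hcover : ∀ x ∈ sA, x ∈ sH ∨ x ∈ g ∨ x ∈ z := by
    intro x hx
    by_cases h1 : x ∈ sHK
    · by_cases h2 : x ∈ sH
      · exact Or.inl h2
      · exact Or.inr (Or.inl (hg ▸ ⟨h1, h2⟩))
    · exact Or.inr (Or.inr (hz ▸ ⟨hx, h1⟩))
  -- membership via coordinates
  have hmem : ∀ (s : Set V), s ⊆ sA → ∀ x : V,
      (x ∈ span k s ↔ ∀ i : sA, b.repr x i ≠ 0 → (i : V) ∈ s) := by
    intro s hs x
    have himg : ⇑b '' {i : sA | (i : V) ∈ s} = s := by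
      ext y
      constructor
      · rintro ⟨i, hi, rfl⟩; rw [hb]; exact hi
      · intro hy; exact ⟨⟨y, hs hy⟩, hy, hb _⟩
    have h2 := Basis.mem_span_image (b := b) (m := x) (s := {i : sA | (i : V) ∈ s})
    rw [himg] at h2
    rw [h2]
    constructor
    · intro h i hi
      exact h (Finsupp.mem_support_iff.mpr hi)
    · intro h i hi
      exact h i (Finsupp.mem_support_iff.mp hi)
  -- the bilinear form
  set B : V →ₗ[k] V →ₗ[k] k := LinearMap.mk₂ k
    (fun x y => ∑ i : sA, b.repr x i * b.repr y (σ i))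
    (fun x x' y => by
      simp only [map_add, Finsupp.add_apply, add_mul, Finset.sum_add_distrib])
    (fun c x y => by
      simp only [map_smul, Finsupp.smul_apply, smul_eq_mul, Finset.mul_sum, mul_assoc])
    (fun x y y' => by
      simp only [map_add, Finsupp.add_apply, mul_add, Finset.sum_add_distrib])
    (fun c x y => by
      simp only [map_smul, Finsupp.smul_apply, smul_eq_mul, Finset.mul_sum]
      congr 1; ext i; ring) with hB
  have hBapp : ∀ x y, B x y = ∑ i : sA, b.repr x i * b.repr y (σ i) := fun x y => rfl
  -- evaluation at basis vectors
  have L1 : ∀ (x : V) (j : sA), B x (b j) = b.repr x (σ j) := by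
    intro x j
    rw [hBapp]
    rw [Fintype.sum_eq_single (σ j) ?h]
    · rw [Basis.repr_self, hσσ, Finsupp.single_apply, if_pos rfl, mul_one]
    · intro i hi
      have : σ i ≠ j := fun hc => hi (by rw [← hσσ i, hc])
      rw [Basis.repr_self, Finsupp.single_apply, if_neg (fun hc => this hc.symm), mul_zero]
  -- symmetry
  have hsymm : ∀ x y, B x y = B y x := by
    intro x y
    rw [hBapp, hBapp]
    rw [← Equiv.sum_comp (Function.Involutive.toPerm σ hσσ)
      (fun i => b.repr y i * b.repr x (σ i))]
    refine Finset.sum_congr rfl fun i _ => ?_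
    show b.repr x i * b.repr y (σ i) = b.repr y (σ i) * b.repr x (σ (σ i))
    rw [hσσ, mul_comm]
  -- spanning elements are in the sets
  refine ⟨B, hsymm, ?_, ?_, ?_, ?_⟩
  · -- left dual of H' is K'
    intro x
    constructor
    · intro hx
      rw [← hspanWg, hmem _ (union_subset ((hWH.trans hHHK).trans hHKA)
        (fun y hy => hHKA (hg ▸ hy).1))]
      intro i hi
      by_contra hiWg
      rcases hcover _ i.2 with hiH | hig | hiz
      · -- i ∈ sH, i ∉ sW (else in sW∪g), so σ i = i
        have hiW : (i : V) ∉ sW := fun hc => hiWg (Or.inl hc)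
        have : σ i = i := hσo i hiW (hdisjHz _ hiH)
        have h0 : B x (b i) = 0 := hx _ (by rw [hb]; exact hsHsub hiH)
        rw [L1, this] at h0
        exact hi h0
      · exact hiWg (Or.inr hig)
      · -- i ∈ z: σ i ∈ sW, b (σ i) ∈ H', σ (σ i) = i
        have h0 : B x (b (σ i)) = 0 := hx _ (by rw [hb]; exact hsHsub (hWH (hσzW i hiz)))
        rw [L1, hσσ] at h0
        exact hi h0
    · intro hx h hh
      have hxs : ∀ i : sA, b.repr x i ≠ 0 → (i : V) ∈ sW ∪ g :=
        (hmem _ (union_subset ((hWH.trans hHHK).trans hHKA)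
          (fun y hy => hHKA (hg ▸ hy).1)) x).mp (hspanWg ▸ hx)
      have hhs : ∀ i : sA, b.repr h i ≠ 0 → (i : V) ∈ sH :=
        (hmem _ (hHHK.trans hHKA) h).mp (hspanH ▸ hh)
      rw [hBapp]
      refine Finset.sum_eq_zero fun i _ => ?_
      by_cases hxi : b.repr x i = 0
      · rw [hxi, zero_mul]
      · rcases hxs i hxi with hiW | hig
        · -- σ i ∈ z, not in sH
          have : b.repr h (σ i) = 0 := by
            by_contra hc
            exact hdisjHz _ (hhs _ hc) (hσWz i hiW)
          rw [this, mul_zero]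
        · -- σ i = i ∈ g, not in sH
          have hσi : σ i = i := hσo i (fun hc => hdisjgW _ hig hc) (hdisjgz _ hig)
          have : b.repr h (σ i) = 0 := by
            by_contra hc
            rw [hσi] at hc
            exact hdisjgH _ hig (hhs _ hc)
          rw [this, mul_zero]
  · -- left dual of K' is H'
    intro x
    constructor
    · intro hx
      rw [← hspanH, hmem _ (hHHK.trans hHKA)]
      intro i hi
      by_contra hiH
      rcases hcover _ i.2 with h' | hig | hiz
      · exact hiH h'
      · have hσi : σ i = i := hσo i (fun hc => hdisjgW _ hig hc) (hdisjgz _ hig)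
        have h0 : B x (b i) = 0 := hx _ (by rw [hb]; exact hWgsub (Or.inr hig))
        rw [L1, hσi] at h0
        exact hi h0
      · have h0 : B x (b (σ i)) = 0 := hx _ (by rw [hb]; exact hWgsub (Or.inl (hσzW i hiz)))
        rw [L1, hσσ] at h0
        exact hi h0
    · intro hx h hh
      have hxs : ∀ i : sA, b.repr x i ≠ 0 → (i : V) ∈ sH :=
        (hmem _ (hHHK.trans hHKA) x).mp (hspanH ▸ hx)
      have hhs : ∀ i : sA, b.repr h i ≠ 0 → (i : V) ∈ sW ∪ g :=
        (hmem _ (union_subset ((hWH.trans hHHK).trans hHKA)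
          (fun y hy => hHKA (hg ▸ hy).1)) h).mp (hspanWg ▸ hh)
      rw [hBapp]
      refine Finset.sum_eq_zero fun i _ => ?_
      by_cases hxi : b.repr x i = 0
      · rw [hxi, zero_mul]
      · have hiH : (i : V) ∈ sH := hxs i hxi
        by_cases hiW : (i : V) ∈ sW
        · -- σ i ∈ z: not in sW ∪ g
          have : b.repr h (σ i) = 0 := by
            by_contra hc
            rcases hhs _ hc with h1 | h1
            · exact hdisjWz _ h1 (hσWz i hiW)
            · exact hdisjgz _ h1 (hσWz i hiW)
          rw [this, mul_zero]
        · have hσi : σ i = i := hσo i hiW (hdisjHz _ hiH)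
          have : b.repr h (σ i) = 0 := by
            by_contra hc
            rw [hσi] at hc
            rcases hhs _ hc with h1 | h1
            · exact hiW h1
            · exact hdisjgH _ h1 hiH
          rw [this, mul_zero]
  · -- surjectivity onto dual
    intro f
    refine ⟨∑ j : sA, f (b (σ j)) • b j, ?_⟩
    apply b.ext
    intro j
    rw [L1, Basis.repr_sum_self, hσσ]
  · -- nondegeneracy
    intro x hx
    apply b.ext_elem
    intro i
    rw [map_zero, Finsupp.coe_zero, Pi.zero_apply, ← hσσ i, ← L1]
    exact hx _
open Module in
/-- Auxiliary version of the main theorem, assuming a `ZMod p`-module structure. -/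
theorem elementary_abelian_size_duals_aux {p : ℕ} (hp : p.Prime) {A : Type*} [AddCommGroup A]
    [Fintype A] [Module (ZMod p) A] (hA : ∀ a : A, p • a = 0) (H K : AddSubgroup A)
    (hsize : Nat.card H * Nat.card K = Nat.card A) :
    ∃ φ : A → AddChar A ℂˣ, IsDuality φ ∧ (∀ a b : A, φ a b = φ b a) ∧
      lDual φ (H : Set A) = (K : Set A) ∧ rDual φ (H : Set A) = (K : Set A) ∧
      lDual φ (K : Set A) = (H : Set A) ∧ rDual φ (K : Set A) = (H : Set A) := by
  classical
  haveI : Fact p.Prime := ⟨hp⟩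
  haveI : NeZero p := ⟨hp.ne_zero⟩
  set H' : Submodule (ZMod p) A := AddSubgroup.toZModSubmodule p H with hH'
  set K' : Submodule (ZMod p) A := AddSubgroup.toZModSubmodule p K with hK'
  -- dimensions
  have hcard : ∀ S : AddSubgroup A,
      Nat.card S = p ^ finrank (ZMod p) (AddSubgroup.toZModSubmodule p S) := by
    intro S
    haveI : Fintype (AddSubgroup.toZModSubmodule p S) := Fintype.ofFinite _
    have h1 : Nat.card S = Fintype.card (AddSubgroup.toZModSubmodule p S) := by
      rw [← Nat.card_eq_fintype_card]
      exact Nat.card_congr (Equiv.subtypeEquivRight fun _ => Iff.rfl)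
    rw [h1, card_eq_pow_finrank (K := ZMod p), ZMod.card]
  have hcardA : Nat.card A = p ^ finrank (ZMod p) A := by
    rw [Nat.card_eq_fintype_card, card_eq_pow_finrank (K := ZMod p), ZMod.card]
  have hdim : finrank (ZMod p) H' + finrank (ZMod p) K' = finrank (ZMod p) A := by
    have h2 := hsize
    rw [hcard H, hcard K, hcardA, ← pow_add] at h2
    exact Nat.pow_right_injective hp.two_le h2
  obtain ⟨B, hBsymm, hBH, hBK, hBsurj, hBinj⟩ := exists_good_bilinear H' K' hdim
  -- a primitive p-th root of unity in ℂˣ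
  have hζ := Complex.isPrimitiveRoot_exp p hp.ne_zero
  set ζ : ℂ := Complex.exp (2 * Real.pi * Complex.I / p) with hζdef
  have hζu : IsUnit ζ := hζ.isUnit hp.ne_zero
  have hζup : hζu.unit ^ p = 1 := by
    ext
    rw [Units.val_pow_eq_pow_val, IsUnit.unit_spec, hζ.pow_eq_one, Units.val_one]
  set χ : AddChar (ZMod p) ℂˣ := AddChar.zmodChar p hζup with hχdef
  have hχ1 : ∀ a : ZMod p, χ a = 1 ↔ a = 0 := by
    intro a
    constructor
    · intro h
      have h2 : ζ ^ a.val = 1 := by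
        have h3 := congrArg Units.val h
        rwa [hχdef, AddChar.zmodChar_apply, Units.val_pow_eq_pow_val, IsUnit.unit_spec,
          Units.val_one] at h3
      have hdvd := (hζ.pow_eq_one_iff_dvd a.val).mp h2
      have hlt := ZMod.val_lt a
      exact (ZMod.val_eq_zero a).mp (Nat.eq_zero_of_dvd_of_lt hdvd hlt)
    · rintro rfl
      exact χ.map_zero_eq_one
  have hχinj : Function.Injective χ := by
    intro a b hab
    have h2 : χ (a - b) * χ b = 1 * χ b := by
      rw [← χ.map_add_eq_mul, sub_add_cancel, hab, one_mul]
    have h3 : χ (a - b) = 1 := mul_right_cancel h2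
    have := (hχ1 _).mp h3
    exact sub_eq_zero.mp this
  -- the duality
  set φ : A → AddChar A ℂˣ := fun x =>
    { toFun := fun y => χ (B x y)
      map_zero_eq_one' := by
        show χ (B x 0) = 1
        rw [map_zero]; exact χ.map_zero_eq_one
      map_add_eq_mul' := fun a b => by
        show χ (B x (a + b)) = χ (B x a) * χ (B x b)
        rw [map_add]; exact χ.map_add_eq_mul _ _ } with hφdef
  have hφapp : ∀ x y, φ x y = χ (B x y) := fun x y => rfl
  have hφsymm : ∀ a b, φ a b = φ b a := by
    intro a b; rw [hφapp, hφapp, hBsymm]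
  have hφone : ∀ x y, φ x y = 1 ↔ B x y = 0 := by
    intro x y; rw [hφapp]; exact hχ1 _
  -- dual code computations
  have hldH : lDual φ (H : Set A) = (K : Set A) := by
    ext x
    simp only [lDual, Set.mem_setOf_eq]
    constructor
    · intro hx
      have : ∀ h ∈ H', B x h = 0 := fun h hh => (hφone x h).mp (hx h hh)
      exact (hBH x).mp this
    · intro hx h hh
      exact (hφone x h).mpr ((hBH x).mpr hx h hh)
  have hldK : lDual φ (K : Set A) = (H : Set A) := by
    ext x
    simp only [lDual, Set.mem_setOf_eq]
    constructor
    · intro hx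
      have : ∀ h ∈ K', B x h = 0 := fun h hh => (hφone x h).mp (hx h hh)
      exact (hBK x).mp this
    · intro hx h hh
      exact (hφone x h).mpr ((hBK x).mpr hx h hh)
  have hrl : ∀ s : Set A, rDual φ s = lDual φ s := by
    intro s
    ext x
    simp only [rDual, lDual, Set.mem_setOf_eq]
    exact ⟨fun h y hy => (hφsymm x y) ▸ h y hy, fun h y hy => (hφsymm y x) ▸ h y hy⟩
  refine ⟨φ, ⟨⟨?_, ?_⟩, ?_⟩, hφsymm, hldH, (hrl _).trans hldH, hldK, (hrl _).trans hldK⟩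
  · -- injective
    intro x y hxy
    have h2 : ∀ v, B x v = B y v := by
      intro v
      exact hχinj (by rw [← hφapp, ← hφapp, hxy])
    have h3 : ∀ v, B (x - y) v = 0 := by
      intro v
      rw [map_sub, LinearMap.sub_apply, h2, sub_self]
    exact sub_eq_zero.mp (hBinj _ h3)
  · -- surjective
    intro ψ
    have hψp : ∀ a : A, (ψ a : ℂ) ^ p = 1 := by
      intro a
      have h2 : ψ a ^ p = 1 := by
        rw [← AddChar.map_nsmul_eq_pow, hA, AddChar.map_zero_eq_one]
      rw [← Units.val_pow_eq_pow_val, h2, Units.val_one]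
    have hch : ∀ a : A, ∃ i : ℕ, ζ ^ i = (ψ a : ℂ) := by
      intro a
      obtain ⟨i, _, hi2⟩ := hζ.eq_pow_of_pow_eq_one (hψp a)
      exact ⟨i, hi2⟩
    choose f hf using hch
    have hχF : ∀ a, χ ((f a : ZMod p)) = ψ a := by
      intro a
      ext
      rw [hχdef, AddChar.zmodChar_apply', Units.val_pow_eq_pow_val, IsUnit.unit_spec, hf]
    have hFadd : ∀ a b : A, ((f (a + b) : ZMod p)) = (f a : ZMod p) + (f b : ZMod p) := by
      intro a b
      apply hχinj
      rw [χ.map_add_eq_mul, hχF, hχF, hχF, ψ.map_add_eq_mul]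
    set Fhom : A →+ ZMod p := AddMonoidHom.mk' (fun a => (f a : ZMod p)) hFadd with hFhom
    obtain ⟨x, hx⟩ := hBsurj (Fhom.toZModLinearMap p)
    refine ⟨x, ?_⟩
    apply DFunLike.ext
    intro y
    rw [hφapp, hx]
    exact hχF y
  · -- multiplicative
    intro a b
    apply DFunLike.ext
    intro y
    rw [AddChar.mul_apply, hφapp, hφapp, hφapp, map_add, LinearMap.add_apply,
      χ.map_add_eq_mul]

/-- In a finite elementary abelian `p`-group, any two subgroups satisfying the size
condition are each other's duals for some symmetric duality. -/
theorem elementary_abelian_size_duals {p : ℕ} (hp : p.Prime) {A : Type*} [AddCommGroup A]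
    [Fintype A] (hA : ∀ a : A, p • a = 0) (H K : AddSubgroup A)
    (hsize : Nat.card H * Nat.card K = Nat.card A) :
    ∃ φ : A → AddChar A ℂˣ, IsDuality φ ∧ (∀ a b : A, φ a b = φ b a) ∧
      lDual φ (H : Set A) = (K : Set A) ∧ rDual φ (H : Set A) = (K : Set A) ∧
      lDual φ (K : Set A) = (H : Set A) ∧ rDual φ (K : Set A) = (H : Set A) := by
  letI : Module (ZMod p) A := AddCommGroup.zmodModule hA
  exact elementary_abelian_size_duals_aux hp hA H K hsize
end

section
/- Let A be a finite abelian group, H ⊆ A a subgroup, and φ₁, φ₂ two dualities of A. Then ℜ_{φ₁}(H) = ℜ_{φ₂}(H) if and only if there exists an automorphism τ of A with τ(H) = H and φ₂ = φ₁ ∘ τ. -/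
/-- The characters of `A` with values in `ℂˣ` are the same as those with values in `ℂ`. -/
noncomputable def unitsCharEquiv (A : Type*) [AddCommGroup A] :
    AddChar A ℂˣ ≃+ AddChar A ℂ where
  toFun ψ := (Units.coeHom ℂ).compAddChar ψ
  invFun ψ :=
    { toFun := fun a ↦ (ψ.val_isUnit a).unit
      map_zero_eq_one' := Units.ext (by simp)
      map_add_eq_mul' := fun a b ↦ Units.ext (by simp [AddChar.map_add_eq_mul]) }
  left_inv ψ := by ext a; rfl
  right_inv ψ := by ext a; simp
  map_add' ψ χ := by ext a; simp

@[simp] lemma unitsCharEquiv_apply {A : Type*} [AddCommGroup A] (ψ : AddChar A ℂˣ) (a : A) :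
    unitsCharEquiv A ψ a = (ψ a : ℂ) := rfl

/-- Separation of points modulo a subgroup by characters vanishing on the subgroup. -/
lemma sep_quot {A : Type*} [AddCommGroup A] [Finite A] (K : AddSubgroup A) {a : A}
    (ha : a ∉ K) : ∃ χ : AddChar A ℂ, (∀ k ∈ K, χ k = 1) ∧ χ a ≠ 1 := by
  have h0 : ((a : A ⧸ K) : A ⧸ K) ≠ 0 := by
    simpa [QuotientAddGroup.eq_zero_iff] using ha
  obtain ⟨ψ, hψ⟩ := AddChar.exists_apply_ne_zero.2 h0
  refine ⟨ψ.compAddMonoidHom (QuotientAddGroup.mk' K), fun k hk ↦ ?_, hψ⟩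
  have : ((k : A ⧸ K)) = 0 := (QuotientAddGroup.eq_zero_iff k).2 hk
  simp [this]

/-- If `x ∉ K`, there is an element of the right dual of `K` on which `φ x` is nontrivial. -/
lemma exists_rdual_ne_one {A : Type*} [AddCommGroup A] [Fintype A]
    (φ : A → AddChar A ℂˣ) (hφ : IsDuality φ) (K : AddSubgroup A) {x : A} (hx : x ∉ K) :
    ∃ h ∈ rDual φ (K : Set A), φ x h ≠ 1 := by
  classical
  let φ' : A ≃+ AddChar A ℂˣ := AddEquiv.mk' (Equiv.ofBijective φ hφ.1) hφ.2
  have : Finite (AddChar A ℂˣ) := Finite.of_equiv A φ'.toEquiv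
  let B : AddSubgroup (AddChar A ℂˣ) := K.map φ'.toAddMonoidHom
  have hxB : φ' x ∉ B := by
    rintro ⟨k, hk, hkx⟩
    exact hx (φ'.injective hkx ▸ hk)
  obtain ⟨Ξ, hΞ1, hΞx⟩ := sep_quot B hxB
  let Ξ' : AddChar (AddChar A ℂ) ℂ := Ξ.compAddMonoidHom (unitsCharEquiv A).symm.toAddMonoidHom
  obtain ⟨h, hh⟩ := AddChar.doubleDualEmb_bijective.surjective Ξ'
  have key : ∀ χ : AddChar A ℂˣ, Ξ χ = (χ h : ℂ) := by
    intro χ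
    have := DFunLike.congr_fun hh (unitsCharEquiv A χ)
    simpa [Ξ'] using this.symm
  refine ⟨h, fun k hk ↦ ?_, fun heq ↦ ?_⟩
  · refine Units.ext ?_
    have h1 : Ξ (φ k) = 1 := hΞ1 _ ⟨k, hk, rfl⟩
    rw [key] at h1
    simpa using h1
  · apply hΞx
    have : Ξ (φ x) = 1 := by rw [key, heq]; simp
    exact this

/-- The right dual determines the subgroup. -/
lemma rdual_injective {A : Type*} [AddCommGroup A] [Fintype A]
    (φ : A → AddChar A ℂˣ) (hφ : IsDuality φ) {K₁ K₂ : AddSubgroup A}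
    (h : rDual φ (K₁ : Set A) = rDual φ (K₂ : Set A)) : K₁ = K₂ := by
  have main : ∀ K₁ K₂ : AddSubgroup A,
      rDual φ (K₁ : Set A) = rDual φ (K₂ : Set A) → ∀ x ∈ K₁, x ∈ K₂ := by
    intro K₁ K₂ h x hx
    by_contra hnx
    obtain ⟨y, hy, hne⟩ := exists_rdual_ne_one φ hφ K₂ hnx
    rw [← h] at hy
    exact hne (hy x hx)
  exact le_antisymm (main K₁ K₂ h) (main K₂ K₁ h.symm)

/-- Two dualities give the same right dual of `H` iff they differ by an automorphism
stabilizing `H`. -/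
theorem same_right_dual_iff_stabilizer {A : Type*} [AddCommGroup A] [Fintype A]
    (H : AddSubgroup A) (φ₁ φ₂ : A → AddChar A ℂˣ)
    (hφ₁ : IsDuality φ₁) (hφ₂ : IsDuality φ₂) :
    rDual φ₁ (H : Set A) = rDual φ₂ (H : Set A) ↔
      ∃ τ : AddAut A, (τ : A → A) '' (H : Set A) = (H : Set A) ∧
        ∀ a : A, φ₂ a = φ₁ (τ a) := by
  constructor
  · intro hEq
    let φ₁' : A ≃+ AddChar A ℂˣ := AddEquiv.mk' (Equiv.ofBijective φ₁ hφ₁.1) hφ₁.2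
    let φ₂' : A ≃+ AddChar A ℂˣ := AddEquiv.mk' (Equiv.ofBijective φ₂ hφ₂.1) hφ₂.2
    let τ : AddAut A := φ₂'.trans φ₁'.symm
    have hτ : ∀ a, φ₁ (τ a) = φ₂ a := fun a ↦ φ₁'.apply_symm_apply (φ₂' a)
    have hmap : rDual φ₁ ((H.map τ.toAddMonoidHom : AddSubgroup A) : Set A)
        = rDual φ₁ (H : Set A) := by
      have h2 : rDual φ₁ ((H.map τ.toAddMonoidHom : AddSubgroup A) : Set A)
          = rDual φ₂ (H : Set A) := by
        ext x
        simp only [rDual, Set.mem_setOf_eq, AddSubgroup.coe_map, Set.mem_image]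
        constructor
        · intro hx h hh
          rw [← hτ h]
          exact hx _ ⟨h, hh, rfl⟩
        · rintro hx χ ⟨h, hh, rfl⟩
          have : φ₁ (τ h) x = 1 := by rw [hτ h]; exact hx h hh
          exact this
      rw [h2, ← hEq]
    have hHH : H.map τ.toAddMonoidHom = H := rdual_injective φ₁ hφ₁ hmap
    refine ⟨τ, ?_, fun a ↦ (hτ a).symm⟩
    have := congrArg (fun K : AddSubgroup A ↦ (K : Set A)) hHH
    simpa [AddSubgroup.coe_map] using this
  · rintro ⟨τ, hτH, hcomp⟩
    ext x
    simp only [rDual, Set.mem_setOf_eq]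
    constructor
    · intro hx h hh
      rw [hcomp]
      exact hx _ (hτH ▸ Set.mem_image_of_mem τ hh)
    · intro hx h hh
      obtain ⟨h', hh', rfl⟩ : h ∈ (τ : A → A) '' (H : Set A) := hτH.symm ▸ hh
      rw [← hcomp]
      exact hx h' hh'
end

section
/- Let A be a finite abelian group with subgroups H, K ⊆ A, and suppose K = ℜ_{φ₀}(H) for some duality φ₀ of A. Then K = ℜ_φ(H) for every duality φ of A if and only if H is a characteristic subgroup of A. Moreover, K = ℜ_φ(H) for every duality φ if and only if K = 𝔏_φ(H) for every duality φ. -/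
section Aux

open Function

set_option linter.unusedSectionVars false

variable {B : Type*} [AddCommGroup B] [Finite B]

private lemma charEquivAux : Nonempty ((Multiplicative B →* ℂˣ) ≃* Multiplicative B) := by
  have : NeZero ((Monoid.exponent (Multiplicative B) : ℕ) : ℂ) :=
    ⟨Nat.cast_ne_zero.mpr Monoid.exponent_ne_zero_of_finite⟩
  exact CommGroup.monoidHom_mulEquiv_of_hasEnoughRootsOfUnity (Multiplicative B) ℂ

private lemma finite_char : Finite (AddChar B ℂˣ) := by
  obtain ⟨e⟩ := charEquivAux (B := B)
  exact Finite.of_equiv _ (AddChar.toMonoidHomEquiv.trans e.toEquiv).symm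

private lemma card_char : Nat.card (AddChar B ℂˣ) = Nat.card B := by
  obtain ⟨e⟩ := charEquivAux (B := B)
  exact Nat.card_congr (AddChar.toMonoidHomEquiv.trans e.toEquiv)

private lemma char_sep {a : B} (ha : a ≠ 0) : ∃ χ : AddChar B ℂˣ, χ a ≠ 1 := by
  have : NeZero ((Monoid.exponent (Multiplicative B) : ℕ) : ℂ) :=
    ⟨Nat.cast_ne_zero.mpr Monoid.exponent_ne_zero_of_finite⟩
  obtain ⟨φ, hφ⟩ := CommGroup.exists_apply_ne_one_of_hasEnoughRootsOfUnity
    (Multiplicative B) ℂ (a := Multiplicative.ofAdd a) (by simpa using ha)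
  exact ⟨AddChar.toMonoidHomEquiv.symm φ, by simpa using hφ⟩

private lemma char_sep' {a : B} (h : ∀ χ : AddChar B ℂˣ, χ a = 1) : a = 0 := by
  by_contra ha
  obtain ⟨χ, hχ⟩ := char_sep ha
  exact hχ (h χ)

private lemma ann_sep (H : AddSubgroup B) {x : B} (hx : x ∉ H) :
    ∃ χ : AddChar B ℂˣ, (∀ h ∈ H, χ h = 1) ∧ χ x ≠ 1 := by
  have h0 : ((x : B ⧸ H)) ≠ 0 := by
    simpa [QuotientAddGroup.eq_zero_iff] using hx
  obtain ⟨ψ, hψ⟩ := char_sep h0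
  refine ⟨ψ.compAddMonoidHom (QuotientAddGroup.mk' H), fun h hh => ?_, ?_⟩
  · have : ((h : B ⧸ H)) = 0 := (QuotientAddGroup.eq_zero_iff h).mpr hh
    simp [AddChar.compAddMonoidHom_apply, QuotientAddGroup.mk'_apply, this]
  · simpa [AddChar.compAddMonoidHom_apply] using hψ

/-- The evaluation character of `a : B` on the character group. -/
private def evalChar (a : B) : AddChar (AddChar B ℂˣ) ℂˣ where
  toFun ρ := ρ a
  map_zero_eq_one' := rfl
  map_add_eq_mul' := fun _ _ => rfl

private lemma evalChar_bijective : Bijective (evalChar (B := B)) := by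
  have i1 : Finite (AddChar B ℂˣ) := finite_char
  have i2 : Finite (AddChar (AddChar B ℂˣ) ℂˣ) := finite_char
  rw [Nat.bijective_iff_injective_and_card]
  refine ⟨fun a b hab => ?_, by rw [card_char, card_char]⟩
  have h : ∀ χ : AddChar B ℂˣ, χ (a - b) = 1 := by
    intro χ
    have h1 : χ a = χ b := congrArg (fun Ξ => Ξ χ) hab
    rw [AddChar.map_sub_eq_div, h1, div_self']
  exact sub_eq_zero.mp (char_sep' h)

private lemma ann_van (G : AddSubgroup (AddChar B ℂˣ)) :
    {χ : AddChar B ℂˣ | ∀ x : B, (∀ ρ ∈ G, ρ x = 1) → χ x = 1} = (G : Set (AddChar B ℂˣ)) := by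
  have i1 : Finite (AddChar B ℂˣ) := finite_char
  ext χ
  constructor
  · intro hχ
    by_contra hG
    obtain ⟨Ξ, hΞ1, hΞ2⟩ := ann_sep G hG
    obtain ⟨x, hx⟩ := evalChar_bijective.2 Ξ
    have hvan : ∀ ρ ∈ G, ρ x = 1 := fun ρ hρ => by
      have := hΞ1 ρ hρ; rwa [← hx] at this
    exact hΞ2 (by rw [← hx]; exact hχ x hvan)
  · intro hχ x hx
    exact hx χ hχ

private lemma duality_map_zero {φ : B → AddChar B ℂˣ} (hφ : IsDuality φ) : φ 0 = 1 := by
  have h := hφ.2 0 0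
  rw [add_zero] at h
  exact AddChar.ext _ _ fun x => by
    have h' := congrArg (fun χ : AddChar B ℂˣ => χ x) h
    simp only [AddChar.mul_apply] at h'
    simpa using left_eq_mul.mp h'

/-- The additive monoid hom associated to a duality. -/
private def dualityHom (φ : B → AddChar B ℂˣ) (hφ : IsDuality φ) : B →+ AddChar B ℂˣ :=
  AddMonoidHom.mk' φ (fun a b => by rw [hφ.2 a b]; rfl)

private lemma rDual_eq_van {φ : B → AddChar B ℂˣ} (hφ : IsDuality φ) (H : AddSubgroup B) :
    rDual φ (H : Set B) =
      {x : B | ∀ ρ ∈ (H.map (dualityHom φ hφ)), ρ x = 1} := by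
  ext x
  simp only [rDual, Set.mem_setOf_eq, AddSubgroup.mem_map]
  constructor
  · rintro h ρ ⟨b, hb, rfl⟩
    exact h b hb
  · intro h b hb
    exact h (dualityHom φ hφ b) ⟨b, hb, rfl⟩

private lemma rDual_inj {φ : B → AddChar B ℂˣ} (hφ : IsDuality φ) (H₁ H₂ : AddSubgroup B)
    (h : rDual φ (H₁ : Set B) = rDual φ (H₂ : Set B)) : (H₁ : Set B) = (H₂ : Set B) := by
  set G₁ := H₁.map (dualityHom φ hφ) with hG₁
  set G₂ := H₂.map (dualityHom φ hφ) with hG₂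
  rw [rDual_eq_van hφ H₁, rDual_eq_van hφ H₂] at h
  have hv : ∀ x : B, (∀ ρ ∈ G₁, ρ x = 1) ↔ (∀ ρ ∈ G₂, ρ x = 1) := fun x => Set.ext_iff.mp h x
  have hmap : (G₁ : Set (AddChar B ℂˣ)) = (G₂ : Set (AddChar B ℂˣ)) := by
    rw [← ann_van G₁, ← ann_van G₂]
    ext χ
    simp only [Set.mem_setOf_eq]
    exact ⟨fun hχ x hx => hχ x ((hv x).mpr hx), fun hχ x hx => hχ x ((hv x).mp hx)⟩
  ext x
  constructor
  · intro hx
    have : φ x ∈ G₂ := by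
      rw [← SetLike.mem_coe, ← hmap]
      exact ⟨x, hx, rfl⟩
    obtain ⟨b, hb, hbe⟩ := this
    have : b = x := hφ.1.1 hbe
    rwa [← this]
  · intro hx
    have : φ x ∈ G₁ := by
      rw [← SetLike.mem_coe, hmap]
      exact ⟨x, hx, rfl⟩
    obtain ⟨b, hb, hbe⟩ := this
    have : b = x := hφ.1.1 hbe
    rwa [← this]

/-- The transpose of a duality. -/
private def transposeFun (φ : B → AddChar B ℂˣ) (hφ : IsDuality φ) : B → AddChar B ℂˣ :=
  fun a =>
  { toFun := fun b => φ b a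
    map_zero_eq_one' := by
      show φ 0 a = 1
      rw [duality_map_zero hφ]; rfl
    map_add_eq_mul' := fun b c => by
      show φ (b + c) a = φ b a * φ c a
      rw [hφ.2 b c]; rfl }

private lemma transposeFun_apply {φ : B → AddChar B ℂˣ} (hφ : IsDuality φ) (a b : B) :
    transposeFun φ hφ a b = φ b a := rfl

private lemma transposeFun_duality {φ : B → AddChar B ℂˣ} (hφ : IsDuality φ) :
    IsDuality (transposeFun φ hφ) := by
  have i1 : Finite (AddChar B ℂˣ) := finite_char
  constructor
  · rw [Nat.bijective_iff_injective_and_card]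
    refine ⟨fun a b hab => ?_, card_char.symm⟩
    have h : ∀ χ : AddChar B ℂˣ, χ (a - b) = 1 := by
      intro χ
      obtain ⟨c, rfl⟩ := hφ.1.2 χ
      have h1 : φ c a = φ c b := congrArg (fun Ξ => Ξ c) hab
      rw [AddChar.map_sub_eq_div, h1, div_self']
    exact sub_eq_zero.mp (char_sep' h)
  · intro a b
    refine AddChar.ext _ _ fun c => ?_
    exact AddChar.map_add_eq_mul (φ c) a b

private lemma lDual_eq_rDual_transpose {φ : B → AddChar B ℂˣ} (hφ : IsDuality φ) (S : Set B) :
    lDual φ S = rDual (transposeFun φ hφ) S := rfl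

private lemma rDual_eq_lDual_transpose {φ : B → AddChar B ℂˣ} (hφ : IsDuality φ) (S : Set B) :
    rDual φ S = lDual (transposeFun φ hφ) S := rfl

private lemma comp_duality {φ₀ : B → AddChar B ℂˣ} (hφ₀ : IsDuality φ₀) (τ : AddAut B) :
    IsDuality (φ₀ ∘ ⇑τ) := by
  refine ⟨hφ₀.1.comp τ.bijective, fun a b => ?_⟩
  simp only [Function.comp_apply, map_add]
  exact hφ₀.2 _ _

private lemma rDual_comp (φ₀ : B → AddChar B ℂˣ) (τ : AddAut B) (S : Set B) :
    rDual (φ₀ ∘ ⇑τ) S = rDual φ₀ (⇑τ '' S) := by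
  ext x
  simp only [rDual, Set.mem_setOf_eq, Set.forall_mem_image]
  rfl

private lemma exists_aut {φ₀ φ : B → AddChar B ℂˣ} (hφ₀ : IsDuality φ₀) (hφ : IsDuality φ) :
    ∃ τ : AddAut B, φ = φ₀ ∘ ⇑τ := by
  set e : B ≃ B := (Equiv.ofBijective φ hφ.1).trans (Equiv.ofBijective φ₀ hφ₀.1).symm with he
  have key : ∀ x, φ₀ (e x) = φ x := fun x =>
    (Equiv.ofBijective φ₀ hφ₀.1).apply_symm_apply (φ x)
  have hadd : ∀ a b, e (a + b) = e a + e b := by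
    intro a b
    apply hφ₀.1.1
    rw [key, hφ.2, ← key a, ← key b, ← hφ₀.2]
  exact ⟨AddEquiv.mk' e hadd, funext fun x => (key x).symm⟩

end Aux

/-- `K` is the right dual of `H` for every duality iff `H` is a characteristic subgroup;
moreover this happens iff `K` is the left dual of `H` for every duality. -/
theorem right_dual_independent_iff_characteristic {A : Type*} [AddCommGroup A] [Fintype A]
    (H K : AddSubgroup A) (φ₀ : A → AddChar A ℂˣ) (hφ₀ : IsDuality φ₀)
    (hK : (K : Set A) = rDual φ₀ (H : Set A)) :
    ((∀ φ : A → AddChar A ℂˣ, IsDuality φ → (K : Set A) = rDual φ (H : Set A)) ↔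
      (∀ τ : AddAut A, (τ : A → A) '' (H : Set A) = (H : Set A))) ∧
    ((∀ φ : A → AddChar A ℂˣ, IsDuality φ → (K : Set A) = rDual φ (H : Set A)) ↔
      (∀ φ : A → AddChar A ℂˣ, IsDuality φ → (K : Set A) = lDual φ (H : Set A))) := by
  constructor
  · constructor
    · -- duality-independence → characteristic
      intro hAll τ
      have hφ : IsDuality (φ₀ ∘ ⇑τ) := comp_duality hφ₀ τ
      have h1 : (K : Set A) = rDual φ₀ (⇑τ '' (H : Set A)) := by
        rw [hAll _ hφ, rDual_comp]
      have himg : (⇑τ '' (H : Set A)) = ((H.map τ.toAddMonoidHom : AddSubgroup A) : Set A) := by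
        rw [AddSubgroup.coe_map, AddEquiv.coe_toAddMonoidHom]
      have h2 : rDual φ₀ ((H.map τ.toAddMonoidHom : AddSubgroup A) : Set A)
          = rDual φ₀ (H : Set A) := by
        rw [← himg, ← h1, hK]
      have := rDual_inj hφ₀ (H.map τ.toAddMonoidHom) H h2
      rw [himg]
      exact this
    · -- characteristic → duality-independence
      intro hchar φ hφ
      obtain ⟨τ, rfl⟩ := exists_aut hφ₀ hφ
      rw [rDual_comp, hchar τ]
      exact hK
  · constructor
    · intro hR φ hφ
      rw [lDual_eq_rDual_transpose hφ]
      exact hR _ (transposeFun_duality hφ)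
    · intro hL φ hφ
      rw [rDual_eq_lDual_transpose hφ]
      exact hL _ (transposeFun_duality hφ)
end

section
/- Let A be a finite abelian group with subgroups H, K ⊆ A, and suppose K = ℜ_{φ₀}(H) for some duality φ₀ of A. Then H is a characteristic subgroup of A if and only if K is a characteristic subgroup of A. -/
namespace DualCharAux

open Function

variable {A : Type*} [AddCommGroup A]

/-- Convert a `ℂ`-valued additive character into a `ℂˣ`-valued one. -/
noncomputable def ofComplex (ψ : AddChar A ℂ) : AddChar A ℂˣ where
  toFun a := (ψ.val_isUnit a).unit
  map_zero_eq_one' := by ext; simp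
  map_add_eq_mul' a b := by ext; simp [AddChar.map_add_eq_mul]

lemma ofComplex_coe (ψ : AddChar A ℂ) (a : A) : ((ofComplex ψ a : ℂˣ) : ℂ) = ψ a :=
  IsUnit.unit_spec _

lemma eq_zero_of_forall [Fintype A] {a : A}
    (h : ∀ χ : AddChar A ℂˣ, χ a = 1) : a = 0 := by
  refine (AddChar.forall_apply_eq_zero (α := A) (a := a)).mp fun ψ => ?_
  have h1 := h (ofComplex ψ)
  have := ofComplex_coe ψ a
  rw [h1] at this
  simpa using this.symm

lemma card_addChar_units_le (G : Type*) [AddCommGroup G] [Fintype G] :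
    Nat.card (AddChar G ℂˣ) ≤ Nat.card G := by
  have hinj : Injective fun ψ : AddChar G ℂˣ => (Units.coeHom ℂ).compAddChar ψ :=
    MonoidHom.compAddChar_injective_right _ (fun _ _ h => Units.ext h)
  have h1 : Nat.card (AddChar G ℂˣ) ≤ Nat.card (AddChar G ℂ) :=
    Nat.card_le_card_of_injective _ hinj
  have h2 : Nat.card (AddChar G ℂ) ≤ Nat.card G := by
    simpa [Nat.card_eq_fintype_card] using AddChar.card_addChar_le (G := G) (R := ℂ)
  omega

variable {φ : A → AddChar A ℂˣ}

lemma map_zero (hφ : IsDuality φ) : φ 0 = 1 := by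
  have h := hφ.2 0 0
  rw [add_zero] at h
  refine AddChar.ext _ _ fun a => ?_
  have := DFunLike.congr_fun h a
  rw [AddChar.mul_apply] at this
  exact (left_eq_mul.mp this).trans rfl

/-- The transpose of a duality. -/
noncomputable def transpose (hφ : IsDuality φ) (a : A) : AddChar A ℂˣ where
  toFun b := φ b a
  map_zero_eq_one' := by show φ 0 a = 1; rw [map_zero hφ]; rfl
  map_add_eq_mul' b c := by
    show φ (b + c) a = φ b a * φ c a
    rw [hφ.2 b c]; rfl

lemma transpose_apply (hφ : IsDuality φ) (a b : A) : transpose hφ a b = φ b a := rfl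

lemma transpose_isDuality [Fintype A] (hφ : IsDuality φ) : IsDuality (transpose hφ) := by
  have hadd : ∀ a b : A, transpose hφ (a + b) = transpose hφ a * transpose hφ b := by
    intro a b
    refine AddChar.ext _ _ fun x => ?_
    rw [AddChar.mul_apply, transpose_apply, transpose_apply, transpose_apply,
      AddChar.map_add_eq_mul]
  have hinj : Injective (transpose hφ) := by
    intro a b hab
    have h1 : ∀ x : A, φ x a = φ x b := fun x => DFunLike.congr_fun hab x
    have h2 : ∀ χ : AddChar A ℂˣ, χ (a - b) = 1 := by
      intro χ
      obtain ⟨x, rfl⟩ := hφ.1.2 χ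
      rw [sub_eq_add_neg, AddChar.map_add_eq_mul, AddChar.map_neg_eq_inv, h1 x,
        mul_inv_cancel]
    have := eq_zero_of_forall h2
    exact sub_eq_zero.mp this
  have : Finite (AddChar A ℂˣ) := Finite.of_surjective φ hφ.1.2
  have hcard : Nat.card A = Nat.card (AddChar A ℂˣ) := Nat.card_eq_of_bijective φ hφ.1
  exact ⟨(Nat.bijective_iff_injective_and_card _).mpr ⟨hinj, hcard⟩, hadd⟩

lemma rDual_transpose [Fintype A] (hφ : IsDuality φ) (S : Set A) :
    rDual (transpose hφ) S = lDual φ S := rfl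

/-- Forward direction: if `H` is characteristic and `K = rDual φ H`, then `K` is
characteristic. -/
lemma fwd [Fintype A] (hφ : IsDuality φ) (H K : AddSubgroup A)
    (hK : (K : Set A) = rDual φ (H : Set A))
    (hH : ∀ τ : AddAut A, (τ : A → A) '' (H : Set A) = (H : Set A)) :
    ∀ τ : AddAut A, (τ : A → A) '' (K : Set A) = (K : Set A) := by
  intro τ
  -- the twisted duality ψ a = φ a ∘ τ⁻¹
  set ψ : A → AddChar A ℂˣ := fun a => (φ a).compAddMonoidHom (τ.symm : A ≃+ A).toAddMonoidHom
    with hψdef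
  have hψ_apply : ∀ a x : A, ψ a x = φ a (τ.symm x) := fun a x => rfl
  have hψbij : Bijective ψ := by
    constructor
    · intro a b hab
      apply hφ.1.1
      refine AddChar.ext _ _ fun x => ?_
      have := DFunLike.congr_fun hab (τ x)
      rw [hψ_apply, hψ_apply] at this
      simpa using this
    · intro χ
      obtain ⟨a, ha⟩ := hφ.1.2 (χ.compAddMonoidHom (τ : A ≃+ A).toAddMonoidHom)
      refine ⟨a, ?_⟩
      refine AddChar.ext _ _ fun x => ?_
      rw [hψ_apply, ha, AddChar.compAddMonoidHom_apply]
      simp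
  -- the automorphism σ with φ ∘ σ = ψ
  set e := Equiv.ofBijective φ hφ.1 with he
  set σ : A → A := fun a => e.symm (ψ a) with hσdef
  have hφσ : ∀ a, φ (σ a) = ψ a := fun a => e.apply_symm_apply (ψ a)
  have hσbij : Bijective σ := e.symm.bijective.comp hψbij
  have hσadd : ∀ a b : A, σ (a + b) = σ a + σ b := by
    intro a b
    apply hφ.1.1
    rw [hφσ, hφ.2, hφσ, hφσ]
    refine AddChar.ext _ _ fun x => ?_
    rw [hψ_apply, AddChar.mul_apply, hψ_apply, hψ_apply, hφ.2, AddChar.mul_apply]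
  set τ' : AddAut A := AddEquiv.mk' (Equiv.ofBijective σ hσbij) hσadd with hτ'
  have hσH : σ '' (H : Set A) = (H : Set A) := hH τ'
  have hKmem : ∀ x : A, x ∈ (K : Set A) ↔ x ∈ rDual φ (H : Set A) := fun x => by rw [hK]
  ext x
  constructor
  · rintro ⟨y, hy, rfl⟩
    rw [hKmem]
    intro h hh
    rw [← hσH] at hh
    obtain ⟨h', hh', rfl⟩ := hh
    rw [hφσ, hψ_apply]
    have heq : (τ.symm) (τ y) = y := τ.symm_apply_apply y
    rw [heq]
    have hyK : y ∈ rDual φ (H : Set A) := (hKmem y).mp hy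
    exact hyK h' hh'
  · intro hx
    refine ⟨τ.symm x, ?_, τ.apply_symm_apply x⟩
    rw [hKmem]
    intro h hh
    have hxK : x ∈ rDual φ (H : Set A) := (hKmem x).mp hx
    have hh' : σ h ∈ (H : Set A) := by rw [← hσH]; exact ⟨h, hh, rfl⟩
    have := hxK (σ h) hh'
    rw [hφσ, hψ_apply] at this
    exact this

/-- Double-dual: if `K = rDual φ H` then `H = lDual φ K`. -/
lemma lDual_rDual [Fintype A] (hφ : IsDuality φ) (H K : AddSubgroup A)
    (hK : (K : Set A) = rDual φ (H : Set A)) :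
    (H : Set A) = lDual φ (K : Set A) := by
  classical
  set L : Set A := lDual φ (K : Set A) with hL
  have hHL : (H : Set A) ⊆ L := by
    intro h hh x hx
    rw [hK] at hx
    exact hx h hh
  -- the evaluation homomorphism `A →+ AddChar H ℂˣ` with kernel K
  have hφ0 : ∀ x : A, φ 0 x = 1 := fun x => by rw [map_zero hφ]; rfl
  set Ψ : A →+ AddChar H ℂˣ :=
    { toFun := fun x =>
        { toFun := fun h => φ (h : A) x
          map_zero_eq_one' := by
            show φ ((0 : H) : A) x = 1
            rw [ZeroMemClass.coe_zero]
            exact hφ0 x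
          map_add_eq_mul' := fun h₁ h₂ => by
            show φ ((h₁ + h₂ : H) : A) x = φ (h₁ : A) x * φ (h₂ : A) x
            rw [AddSubgroup.coe_add, hφ.2, AddChar.mul_apply]
          }
      map_zero' := by
        refine AddChar.ext _ _ fun h => ?_
        show φ (h : A) 0 = _
        rw [AddChar.map_zero_eq_one]
        rfl
      map_add' := fun x y => by
        refine AddChar.ext _ _ fun h => ?_
        show φ (h : A) (x + y) = _
        rw [AddChar.map_add_eq_mul]
        rfl } with hΨ
  have hΨ_apply : ∀ (x : A) (h : H), Ψ x h = φ (h : A) x := fun x h => rfl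
  have hker : Ψ.ker = K := by
    ext x
    rw [AddMonoidHom.mem_ker]
    constructor
    · intro hx
      rw [← SetLike.mem_coe, hK]
      intro h hh
      have h2 : φ h x = Ψ x ⟨h, hh⟩ := rfl
      rw [h2, hx]
      rfl
    · intro hx
      have hx' : x ∈ rDual φ (H : Set A) := by rw [← SetLike.mem_coe, hK] at hx; exact hx
      refine AddChar.ext _ _ fun h => ?_
      rw [hΨ_apply]
      have := hx' (h : A) h.2
      rw [this]
      rfl
  have hfin : Finite (A ⧸ K) := Quotient.finite _
  have hfinH : Finite (AddChar (↥H) ℂˣ) := by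
    have : Injective fun ψ : AddChar (↥H) ℂˣ => (Units.coeHom ℂ).compAddChar ψ :=
      MonoidHom.compAddChar_injective_right _ (fun _ _ h => Units.ext h)
    exact Finite.of_injective _ this
  -- Step A : card (A ⧸ K) ≤ card H
  have hstepA : Nat.card (A ⧸ K) ≤ Nat.card H := by
    have h1 : Nat.card (A ⧸ K) = Nat.card (A ⧸ Ψ.ker) := by rw [hker]
    have h2 : Nat.card (A ⧸ Ψ.ker) = Nat.card Ψ.range :=
      Nat.card_congr (QuotientAddGroup.quotientKerEquivRange Ψ).toEquiv
    have h3 : Nat.card Ψ.range ≤ Nat.card (AddChar (↥H) ℂˣ) :=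
      Nat.card_le_card_of_injective _ Subtype.val_injective
    have h4 : Nat.card (AddChar (↥H) ℂˣ) ≤ Nat.card (↥H) := card_addChar_units_le ↥H
    omega
  -- Step B : card L ≤ card (A ⧸ K), via descending characters to the quotient
  have hstepB : Nat.card L ≤ Nat.card (A ⧸ K) := by
    have hconst : ∀ a : A, a ∈ L → ∀ x y : A,
        @Setoid.r _ (QuotientAddGroup.leftRel K) x y → φ a x = φ a y := by
      intro a ha x y hxy
      rw [QuotientAddGroup.leftRel_apply] at hxy
      have : φ a y = φ a (x + (-x + y)) := by rw [add_neg_cancel_left]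
      rw [this, AddChar.map_add_eq_mul, ha _ hxy, mul_one]
    set D : L → AddChar (A ⧸ K) ℂˣ := fun a =>
      { toFun := fun q => Quotient.liftOn' q (φ (a : A)) (hconst a a.2)
        map_zero_eq_one' := by
          show Quotient.liftOn' (QuotientAddGroup.mk 0) (φ (a : A)) _ = 1
          show φ (a : A) 0 = 1
          exact AddChar.map_zero_eq_one _
        map_add_eq_mul' := fun p q => by
          refine QuotientAddGroup.induction_on p fun x => ?_
          refine QuotientAddGroup.induction_on q fun y => ?_
          show φ (a : A) (x + y) = φ (a : A) x * φ (a : A) y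
          exact AddChar.map_add_eq_mul _ _ _ } with hD
    have hDinj : Injective D := by
      intro a b hab
      have h1 : ∀ x : A, φ (a : A) x = φ (b : A) x := by
        intro x
        exact DFunLike.congr_fun hab (QuotientAddGroup.mk x)
      have h2 : φ (a : A) = φ (b : A) := AddChar.ext _ _ h1
      exact Subtype.ext (hφ.1.1 h2)
    have hfinQ : Fintype (A ⧸ K) := Fintype.ofFinite _
    have : Finite (AddChar (A ⧸ K) ℂˣ) :=
      Finite.of_injective _ (MonoidHom.compAddChar_injective_right (Units.coeHom ℂ) (fun _ _ h => Units.ext h))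
    have h5 : Nat.card L ≤ Nat.card (AddChar (A ⧸ K) ℂˣ) :=
      Nat.card_le_card_of_injective D hDinj
    have h6 : Nat.card (AddChar (A ⧸ K) ℂˣ) ≤ Nat.card (A ⧸ K) :=
      card_addChar_units_le (A ⧸ K)
    omega
  have hcard : L.ncard ≤ (H : Set A).ncard := by
    have e1 : L.ncard = Nat.card L := (Nat.card_coe_set_eq _).symm
    have e2 : (H : Set A).ncard = Nat.card H := (Nat.card_coe_set_eq _).symm
    omega
  exact Set.eq_of_subset_of_ncard_le hHL hcard (Set.toFinite L)

end DualCharAux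

/-- If `K` is a right dual of `H` for some duality, then `H` is characteristic iff `K` is
characteristic. -/
theorem dual_characteristic_iff {A : Type*} [AddCommGroup A] [Fintype A]
    (H K : AddSubgroup A) (φ₀ : A → AddChar A ℂˣ) (hφ₀ : IsDuality φ₀)
    (hK : (K : Set A) = rDual φ₀ (H : Set A)) :
    (∀ τ : AddAut A, (τ : A → A) '' (H : Set A) = (H : Set A)) ↔
      (∀ τ : AddAut A, (τ : A → A) '' (K : Set A) = (K : Set A)) := by
  constructor
  · exact DualCharAux.fwd hφ₀ H K hK
  · intro hKchar
    have hH : (H : Set A) = rDual (DualCharAux.transpose hφ₀) (K : Set A) := by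
      rw [DualCharAux.rDual_transpose]
      exact DualCharAux.lDual_rDual hφ₀ H K hK
    exact DualCharAux.fwd (DualCharAux.transpose_isDuality hφ₀) K H hH hKchar
end

section
/- Let p be a prime and A a finite abelian p-group (every element has p-power order). Let φ₁, φ₂ be two dualities of A. Then 𝔏_{φ₂}(H) = 𝔏_{φ₁}(H) and ℜ_{φ₂}(H) = ℜ_{φ₁}(H) hold for every subgroup H ⊆ A if and only if there exists an integer m coprime to p such that φ₂(a) = φ₁(m • a) for all a ∈ A. -/
lemma zmod_mem_zmultiples_of_dvd {d : ℕ} (hd : d ≠ 0) (x y : ZMod d)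
    (h : addOrderOf y ∣ addOrderOf x) : y ∈ AddSubgroup.zmultiples x := by
  haveI : NeZero d := ⟨hd⟩
  have hx : ((x.val : ℕ) : ZMod d) = x := ZMod.natCast_rightInverse x
  have hy : ((y.val : ℕ) : ZMod d) = y := ZMod.natCast_rightInverse y
  set g := d.gcd x.val with hgdef
  set h' := d.gcd y.val with hh'def
  have hox : addOrderOf x = d / g := by rw [← hx, ZMod.addOrderOf_coe _ hd]
  have hoy : addOrderOf y = d / h' := by rw [← hy, ZMod.addOrderOf_coe _ hd]
  have hgd : g ∣ d := Nat.gcd_dvd_left _ _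
  have hh'd : h' ∣ d := Nat.gcd_dvd_left _ _
  have hdpos : 0 < d := Nat.pos_of_ne_zero hd
  have hgpos : 0 < g := Nat.gcd_pos_of_pos_left _ hdpos
  have hh'pos : 0 < h' := Nat.gcd_pos_of_pos_left _ hdpos
  -- g ∣ h'
  have hgh' : g ∣ h' := by
    obtain ⟨s, hs⟩ : d / h' ∣ d / g := by rw [← hox, ← hoy]; exact h
    have h1 : h' * (d / h') = d := Nat.mul_div_cancel' hh'd
    have h2 : g * (d / g) = d := Nat.mul_div_cancel' hgd
    have h3 : g * ((d / h') * s) = h' * (d / h') := by rw [← hs, h2, h1]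
    have h4 : (g * s) * (d / h') = h' * (d / h') := by ring_nf; ring_nf at h3; linarith
    have h5 : g * s = h' := Nat.eq_of_mul_eq_mul_right (Nat.div_pos (Nat.le_of_dvd hdpos hh'd) hh'pos) h4
    exact ⟨s, h5.symm⟩
  have hgy : g ∣ y.val := hgh'.trans (Nat.gcd_dvd_right _ _)
  -- Bezout: (g : ZMod d) = (gcdB) * x
  have bez : (g : ℤ) = d * Nat.gcdA d x.val + x.val * Nat.gcdB d x.val := Nat.gcd_eq_gcd_ab d x.val
  obtain ⟨t, ht⟩ := hgy
  refine ⟨(t : ℤ) * Nat.gcdB d x.val, ?_⟩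
  have : y = ((g : ZMod d)) * ((t : ℕ) : ZMod d) := by
    rw [← hy, ht]; push_cast; ring
  show ((t : ℤ) * Nat.gcdB d x.val) • x = y
  rw [zsmul_eq_mul, this]
  have hg2 : (g : ZMod d) = (x : ZMod d) * ((Nat.gcdB d x.val : ℤ) : ZMod d) := by
    have := congrArg (fun z : ℤ => ((z : ZMod d))) bez
    push_cast at this
    rw [this, ZMod.natCast_self, hx]; ring
  rw [hg2]; push_cast; ring

open Complex in
lemma char_pow_of_ker_subset {A : Type*} [AddCommGroup A] [Fintype A]
    (χ₁ χ₂ : AddChar A ℂˣ) (h : ∀ x, χ₁ x = 1 → χ₂ x = 1) :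
    ∃ n : ℤ, ∀ x, χ₂ x = χ₁ x ^ n := by
  classical
  set d := Fintype.card A with hddef
  have hd : d ≠ 0 := Fintype.card_ne_zero
  haveI : NeZero d := ⟨hd⟩
  set ζ : ℂ := Complex.exp (2 * Real.pi * I / d) with hζdef
  have hζ : IsPrimitiveRoot ζ d := Complex.isPrimitiveRoot_exp d hd
  have hζ0 : ζ ≠ 0 := hζ.ne_zero hd
  -- master lemma
  have M : ∀ i j : ℤ, ζ ^ i = ζ ^ j ↔ ((i : ZMod d) = (j : ZMod d)) := by
    intro i j
    rw [ZMod.intCast_eq_intCast_iff, Int.modEq_iff_dvd, ← hζ.zpow_eq_one_iff_dvd,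
      zpow_sub₀ hζ0, div_eq_one_iff_eq (zpow_ne_zero _ hζ0)]
    exact eq_comm
  -- construct the "logarithm" homs
  have key : ∀ χ : AddChar A ℂˣ, ∀ x : A, ∃ i : ℕ, ζ ^ i = ((χ x : ℂˣ) : ℂ) := by
    intro χ x
    have hpow : ((χ x : ℂˣ) : ℂ) ^ d = 1 := by
      have h1 : χ x ^ d = 1 := by
        rw [← AddChar.map_nsmul_eq_pow, card_nsmul_eq_zero, AddChar.map_zero_eq_one]
      calc ((χ x : ℂˣ) : ℂ) ^ d = ((χ x ^ d : ℂˣ) : ℂ) := by push_cast; ring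
      _ = 1 := by rw [h1]; rfl
    obtain ⟨i, _, hi⟩ := hζ.eq_pow_of_pow_eq_one hpow
    exact ⟨i, hi⟩
  set c : AddChar A ℂˣ → A → ℕ := fun χ x => Classical.choose (key χ x) with hcdef
  have hc : ∀ χ x, ζ ^ (c χ x) = ((χ x : ℂˣ) : ℂ) := fun χ x => Classical.choose_spec (key χ x)
  -- additivity in ZMod d
  have hadd : ∀ χ : AddChar A ℂˣ, ∀ x y : A,
      ((c χ (x + y) : ℤ) : ZMod d) = ((c χ x + c χ y : ℤ) : ZMod d) := by
    intro χ x y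
    rw [← M]
    have h1 : ζ ^ ((c χ (x+y) : ℤ)) = ((χ (x+y) : ℂˣ) : ℂ) := by
      rw [zpow_natCast]; exact hc χ (x+y)
    rw [h1, AddChar.map_add_eq_mul, zpow_add₀ hζ0]
    push_cast
    rw [zpow_natCast, zpow_natCast, hc χ x, hc χ y]
  -- bundled homs
  have mkhom : ∀ χ : AddChar A ℂˣ, ∃ f : A →+ ZMod d, ∀ x, f x = ((c χ x : ℤ) : ZMod d) := by
    intro χ
    refine ⟨AddMonoidHom.mk' (fun x => ((c χ x : ℤ) : ZMod d)) ?_, fun x => rfl⟩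
    intro x y
    show ((c χ (x + y) : ℤ) : ZMod d) = ((c χ x : ℤ) : ZMod d) + ((c χ y : ℤ) : ZMod d)
    rw [hadd]; push_cast; ring
  obtain ⟨f₁, hf₁⟩ := mkhom χ₁
  obtain ⟨f₂, hf₂⟩ := mkhom χ₂
  -- values: χ x = ζ ^ f x  in the sense below
  have heval : ∀ (χ : AddChar A ℂˣ) (f : A →+ ZMod d), (∀ x, f x = ((c χ x : ℤ) : ZMod d)) →
      ∀ (x : A) (i : ℤ), ((i : ZMod d) = f x) → ζ ^ i = ((χ x : ℂˣ) : ℂ) := by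
    intro χ f hf x i hi
    rw [hf x] at hi
    rw [(M i (c χ x)).mpr hi, zpow_natCast, hc]
  -- kernel containment
  have hker : ∀ x, f₁ x = 0 → f₂ x = 0 := by
    intro x hx
    have h1 : ζ ^ (0 : ℤ) = ((χ₁ x : ℂˣ) : ℂ) := heval χ₁ f₁ hf₁ x 0 (by rw [hx]; simp)
    have h1' : χ₁ x = 1 := by
      apply Units.ext
      rw [← h1, zpow_zero]; rfl
    have h2 : χ₂ x = 1 := h x h1'
    have : ((c χ₂ x : ℤ) : ZMod d) = ((0 : ℤ) : ZMod d) := by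
      rw [← M, zpow_natCast, hc, h2, zpow_zero]; rfl
    rw [hf₂ x, this]; simp
  -- cyclic range argument
  obtain ⟨u, hu⟩ := IsAddCyclic.exists_generator (α := f₁.range)
  obtain ⟨xu, hxu⟩ := u.2
  -- order divisibility
  have hdvd : addOrderOf (f₂ xu) ∣ addOrderOf ((u : ZMod d)) := by
    apply addOrderOf_dvd_of_nsmul_eq_zero
    have h0 : addOrderOf (u : ZMod d) • (u : ZMod d) = 0 := addOrderOf_nsmul_eq_zero _
    have h1 : f₁ (addOrderOf (u : ZMod d) • xu) = 0 := by
      rw [map_nsmul, hxu, h0]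
    have h2 := hker _ h1
    rwa [map_nsmul] at h2
  have hmem : f₂ xu ∈ AddSubgroup.zmultiples (u : ZMod d) :=
    zmod_mem_zmultiples_of_dvd hd _ _ hdvd
  obtain ⟨n, hn⟩ := hmem
  refine ⟨n, fun x => ?_⟩
  -- express f₁ x as multiple of u
  obtain ⟨t, ht⟩ := hu ⟨f₁ x, ⟨x, rfl⟩⟩
  have ht' : t • (u : ZMod d) = f₁ x := by
    have := congrArg (Subtype.val) ht
    simpa using this
  -- then f₂ x = t • f₂ xu
  have hf2x : f₂ x = t • f₂ xu := by
    have h1 : f₁ (x - t • xu) = 0 := by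
      rw [map_sub, map_zsmul, hxu, ht']; ring
    have h2 := hker _ h1
    rw [map_sub, map_zsmul, sub_eq_zero] at h2
    exact h2
  have hfinal : f₂ x = n • f₁ x := by
    rw [hf2x, ← hn, ← ht', smul_comm]
  -- translate back
  apply Units.ext
  have e2 : ζ ^ ((c χ₂ x : ℤ)) = ((χ₂ x : ℂˣ) : ℂ) := by rw [zpow_natCast]; exact hc χ₂ x
  have e1 : ζ ^ (n * (c χ₁ x : ℤ)) = (((χ₁ x : ℂˣ) : ℂ)) ^ n := by
    rw [mul_comm, zpow_mul]
    congr 1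
    rw [zpow_natCast]; exact hc χ₁ x
  have hcongr : ((c χ₂ x : ℤ) : ZMod d) = ((n * (c χ₁ x : ℤ) : ℤ) : ZMod d) := by
    rw [← hf₂ x, hfinal, hf₁ x, zsmul_eq_mul]
    push_cast
    ring
  have := (M _ _).mpr hcongr
  rw [e2, e1] at this
  rw [this]
  simp


open scoped DirectSum in
lemma exists_uniform_smul {p : ℕ} (hp : p.Prime) {A : Type*} [AddCommGroup A] [Fintype A]
    (hA : ∀ a : A, ∃ k : ℕ, p ^ k • a = 0)
    (ψ : A → A) (haddψ : ∀ a b, ψ (a + b) = ψ a + ψ b) (hinj : Function.Injective ψ)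
    (hpow : ∀ a, ∃ n : ℤ, ψ a = n • a) :
    ∃ m : ℤ, Int.gcd m p = 1 ∧ ∀ a, ψ a = m • a := by
  classical
  by_cases htriv : ∀ a : A, a = 0
  · exact ⟨1, by simp, fun a => by rw [htriv (ψ a), htriv (1 • a)]⟩
  push_neg at htriv
  obtain ⟨a₀, ha₀⟩ := htriv
  obtain ⟨ι, hι, nn, hnn, ⟨e⟩⟩ := AddCommGroup.equiv_directSum_zmod_of_finite' A
  set θ : (⨁ i, ZMod (nn i)) → (⨁ i, ZMod (nn i)) := fun x => e (ψ (e.symm x)) with hθdef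
  have θadd : ∀ x y : (⨁ i, ZMod (nn i)), θ (x + y) = θ x + θ y := by
    intro x y
    simp only [hθdef, map_add, haddψ]
  have θinj : Function.Injective θ := fun x y hxy =>
    e.symm.injective (hinj (e.injective hxy))
  have θpow : ∀ x : (⨁ i, ZMod (nn i)), ∃ n : ℤ, θ x = n • x := by
    intro x
    obtain ⟨n, hn⟩ := hpow (e.symm x)
    exact ⟨n, by simp only [hθdef, hn, map_zsmul, AddEquiv.apply_symm_apply]⟩
  haveI : ∀ i, NeZero (nn i) := fun i => ⟨by have := hnn i; omega⟩
  set g : ι → (⨁ i, ZMod (nn i)) := fun i => DirectSum.of (fun i => ZMod (nn i)) i 1 with hgdef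
  have hgord : ∀ i, addOrderOf (g i) = nn i := by
    intro i
    rw [hgdef]
    rw [addOrderOf_injective (DirectSum.of (fun i => ZMod (nn i)) i)
      (DirectSum.of_injective i) 1, ZMod.addOrderOf_one]
  haveI : Nonempty ι := by
    by_contra hempty
    haveI : IsEmpty ι := not_nonempty_iff.mp hempty
    apply ha₀
    apply e.injective
    rw [map_zero]
    exact DFinsupp.ext fun i => (IsEmpty.false i).elim
  have hppow : ∀ i, ∃ fi : ℕ, nn i = p ^ fi := by
    intro i
    obtain ⟨kk, hkk⟩ := hA (e.symm (g i))
    have hzero : p ^ kk • g i = 0 := by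
      have h := congrArg e hkk
      rwa [map_nsmul, AddEquiv.apply_symm_apply, map_zero] at h
    have hdvd : addOrderOf (g i) ∣ p ^ kk := addOrderOf_dvd_of_nsmul_eq_zero hzero
    rw [hgord i] at hdvd
    obtain ⟨fi, _, hfi⟩ := (Nat.dvd_prime_pow hp).mp hdvd
    exact ⟨fi, hfi⟩
  choose f hf using hppow
  choose k hk using fun i => θpow (g i)
  have coord : ∀ (z : ℤ) (i j : ι), (z • g j) i = if i = j then (z : ZMod (nn i)) else 0 := by
    intro z i j
    by_cases hij : i = j
    · subst hij
      rw [if_pos rfl, hgdef, DFinsupp.smul_apply, DirectSum.of_eq_same, zsmul_eq_mul, mul_one]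
    · rw [if_neg hij, hgdef, DFinsupp.smul_apply, DirectSum.of_eq_of_ne _ _ _ hij,
        smul_zero]
  have pair : ∀ i j : ι, i ≠ j → ∃ K : ℤ, (nn i : ℤ) ∣ K - k i ∧ (nn j : ℤ) ∣ K - k j := by
    intro i j hij
    obtain ⟨K, hK⟩ := θpow (g i + g j)
    rw [θadd, hk i, hk j, smul_add] at hK
    refine ⟨K, ?_, ?_⟩
    · have hc := congrArg (fun x : (⨁ i, ZMod (nn i)) => x i) hK
      simp [DirectSum.add_apply, coord, hij, Ne.symm hij] at hc
      have := (ZMod.intCast_eq_intCast_iff _ _ _).mp hc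
      exact Int.ModEq.dvd this
    · have hc := congrArg (fun x : (⨁ i, ZMod (nn i)) => x j) hK
      simp [DirectSum.add_apply, coord, hij, Ne.symm hij] at hc
      have := (ZMod.intCast_eq_intCast_iff _ _ _).mp hc
      exact Int.ModEq.dvd this
  obtain ⟨i₀, -, hmax⟩ := Finset.exists_max_image Finset.univ f Finset.univ_nonempty
  set m := k i₀ with hmdef
  have hbase : ∀ j, θ (g j) = m • g j := by
    intro j
    by_cases hj : j = i₀
    · subst hj; exact hk j
    obtain ⟨K, hKi, hKj⟩ := pair i₀ j (fun hc => hj hc.symm)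
    have hdvd : (nn j : ℤ) ∣ (nn i₀ : ℤ) := by
      rw [hf i₀, hf j]
      exact_mod_cast pow_dvd_pow p (hmax j (Finset.mem_univ j))
    have h1 : (nn j : ℤ) ∣ K - m := dvd_trans hdvd hKi
    have h2 : (nn j : ℤ) ∣ k j - m := by
      have := dvd_sub h1 hKj
      simpa using this
    have hznn : (nn j : ℤ) • g j = 0 := by
      rw [natCast_zsmul, ← hgord j]
      exact addOrderOf_nsmul_eq_zero _
    obtain ⟨t, ht⟩ := h2
    rw [hk j, ← sub_eq_zero, ← sub_smul, ht, mul_comm, mul_smul, hznn, smul_zero]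
  set Θ : (⨁ i, ZMod (nn i)) →+ (⨁ i, ZMod (nn i)) := AddMonoidHom.mk' θ θadd with hΘdef
  have hΘθ : ∀ x, Θ x = θ x := fun x => rfl
  have θall : ∀ x : (⨁ i, ZMod (nn i)), θ x = m • x := by
    intro x
    rw [← hΘθ]
    refine DirectSum.induction_on x ?_ ?_ ?_
    · simp
    · intro j y
      have hy1 : (y.val) • (1 : ZMod (nn j)) = y := by
        rw [nsmul_eq_mul, mul_one]
        exact ZMod.natCast_rightInverse y
      have hy : DirectSum.of (fun i => ZMod (nn i)) j y = (y.val) • g j := by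
        rw [hgdef]
        conv_lhs => rw [← hy1]
        exact map_nsmul (DirectSum.of (fun i => ZMod (nn i)) j) _ _
      rw [hy, map_nsmul, hΘθ, hbase j, smul_comm]
    · intro x y hx hy
      rw [map_add, hx, hy, smul_add]
  have hψ : ∀ a : A, ψ a = m • a := by
    intro a
    apply e.injective
    have h1 : θ (e a) = m • e a := θall _
    rw [hθdef] at h1
    simp only [AddEquiv.symm_apply_apply] at h1
    rw [h1, map_zsmul]
  have hf0 : f i₀ ≠ 0 := by
    intro h0
    have := hnn i₀
    rw [hf i₀, h0, pow_zero] at this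
    omega
  have hgcddvd : Int.gcd m p ∣ p := by
    have h : (↑(Int.gcd m (p:ℤ)) : ℤ) ∣ (p:ℤ) := Int.gcd_dvd_right _ _
    exact_mod_cast h
  rcases hp.eq_one_or_self_of_dvd _ hgcddvd with h | h
  · exact ⟨m, h, hψ⟩
  · exfalso
    have hpm : (p : ℤ) ∣ m := by
      have h2 : (↑(Int.gcd m (p:ℤ)) : ℤ) ∣ m := Int.gcd_dvd_left _ _
      rwa [h] at h2
    obtain ⟨m', hm'⟩ := hpm
    set x : (⨁ i, ZMod (nn i)) := p ^ (f i₀ - 1) • g i₀ with hxdef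
    have hx0 : x ≠ 0 := by
      intro hx
      have := addOrderOf_dvd_of_nsmul_eq_zero hx
      rw [hgord i₀, hf i₀] at this
      have := (Nat.pow_dvd_pow_iff_le_right hp.one_lt).mp this
      omega
    apply hx0
    apply θinj
    have hpx : (p : ℤ) • x = 0 := by
      rw [hxdef, natCast_zsmul, smul_smul]
      have hpp : p * p ^ (f i₀ - 1) = p ^ f i₀ := by
        rw [← pow_succ']
        congr 1
        omega
      rw [hpp, ← hf i₀, ← hgord i₀]
      exact addOrderOf_nsmul_eq_zero _
    have hθ0 : θ 0 = 0 := by rw [← hΘθ, map_zero]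
    rw [θall x, hθ0, hm', mul_comm, mul_smul, hpx, smul_zero]


section Helpers

variable {A : Type*} [AddCommGroup A]

lemma duality_map_zero_s16 (φ : A → AddChar A ℂˣ) (hφ : ∀ a b, φ (a + b) = φ a * φ b) :
    φ 0 = 1 := by
  have h : φ 0 * φ 0 = φ 0 := by
    rw [← hφ 0 0, add_zero]
  have h2 : (φ 0 * φ 0) * (φ 0)⁻¹ = φ 0 * (φ 0)⁻¹ := by rw [h]
  rw [mul_assoc, mul_inv_cancel, mul_one] at h2
  exact h2

lemma duality_map_zsmul (φ : A → AddChar A ℂˣ) (hφ : ∀ a b, φ (a + b) = φ a * φ b)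
    (n : ℤ) (a : A) : φ (n • a) = (φ a) ^ n := by
  set Φ : A →+ Additive (AddChar A ℂˣ) :=
    AddMonoidHom.mk' (fun x => Additive.ofMul (φ x)) (fun x y => by
      simp only [hφ]; rfl) with hΦ
  have h1 := map_zsmul Φ n a
  have h2 := congrArg Additive.toMul h1
  simpa [hΦ, toMul_zsmul] using h2

end Helpers




/-- Two dualities of a finite abelian `p`-group give the same left and right duals for
every subgroup iff they differ by multiplication by an integer coprime to `p`. -/
theorem same_duals_iff_smul_coprime {p : ℕ} (hp : p.Prime) {A : Type*} [AddCommGroup A]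
    [Fintype A] (hA : ∀ a : A, ∃ k : ℕ, p ^ k • a = 0)
    (φ₁ φ₂ : A → AddChar A ℂˣ) (hφ₁ : IsDuality φ₁) (hφ₂ : IsDuality φ₂) :
    (∀ H : AddSubgroup A,
        lDual φ₂ (H : Set A) = lDual φ₁ (H : Set A) ∧
        rDual φ₂ (H : Set A) = rDual φ₁ (H : Set A)) ↔
      ∃ m : ℤ, Int.gcd m p = 1 ∧ ∀ a : A, φ₂ a = φ₁ (m • a) := by
  classical
  constructor
  · intro hdual
    -- kernels of φ₁ a and φ₂ a agree
    have hker : ∀ a x, φ₁ a x = 1 → φ₂ a x = 1 := by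
      intro a x hx
      have h := (hdual (AddSubgroup.zmultiples a)).2
      have hxin : x ∈ rDual φ₁ ((AddSubgroup.zmultiples a : AddSubgroup A) : Set A) := by
        intro h hh
        obtain ⟨n, hn⟩ := AddSubgroup.mem_zmultiples_iff.mp hh
        rw [← hn, duality_map_zsmul φ₁ hφ₁.2 n a, AddChar.zpow_apply, hx, one_zpow]
      have hx2 : x ∈ rDual φ₂ ((AddSubgroup.zmultiples a : AddSubgroup A) : Set A) := by
        rw [h]; exact hxin
      exact hx2 a (AddSubgroup.mem_zmultiples a)
    -- pointwise power relation
    have hpow : ∀ a, ∃ n : ℤ, φ₂ a = φ₁ (n • a) := by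
      intro a
      obtain ⟨n, hn⟩ := char_pow_of_ker_subset (φ₁ a) (φ₂ a) (hker a)
      refine ⟨n, ?_⟩
      rw [duality_map_zsmul φ₁ hφ₁.2 n a]
      exact DFunLike.ext _ _ fun x => by rw [AddChar.zpow_apply]; exact hn x
    -- transfer to an automorphism of A
    set e : A ≃ AddChar A ℂˣ := Equiv.ofBijective φ₁ hφ₁.1 with hedef
    have he : ∀ z : A, e.symm (φ₁ z) = z := fun z => e.symm_apply_apply z
    set ψ : A → A := fun a => e.symm (φ₂ a) with hψdef
    have hψval : ∀ a, φ₁ (ψ a) = φ₂ a := by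
      intro a
      show φ₁ (e.symm (φ₂ a)) = φ₂ a
      exact e.apply_symm_apply (φ₂ a)
    have hψadd : ∀ a b, ψ (a + b) = ψ a + ψ b := by
      intro a b
      apply hφ₁.1.1
      rw [hψval, hφ₂.2, ← hψval a, ← hψval b, ← hφ₁.2]
    have hψinj : Function.Injective ψ := by
      intro a b hab
      have : φ₂ a = φ₂ b := by rw [← hψval a, ← hψval b, hab]
      exact hφ₂.1.1 this
    have hψpow : ∀ a, ∃ n : ℤ, ψ a = n • a := by
      intro a
      obtain ⟨n, hn⟩ := hpow a
      exact ⟨n, by rw [hψdef]; show e.symm (φ₂ a) = n • a; rw [hn, he]⟩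
    obtain ⟨m, hm, hmall⟩ := exists_uniform_smul hp hA ψ hψadd hψinj hψpow
    exact ⟨m, hm, fun a => by rw [← hψval a, hmall a]⟩
  · rintro ⟨m, hm, hφ⟩ H
    -- Bezout-type inversion of multiplication by m
    have bez : ∀ a : A, ∃ u : ℤ, u • (m • a) = a := by
      intro a
      obtain ⟨kk, hkk⟩ := hA a
      have hcop : IsCoprime m ((p : ℤ) ^ kk) :=
        (Int.isCoprime_iff_gcd_eq_one.mpr hm).pow_right
      obtain ⟨u, v, huv⟩ := hcop
      refine ⟨u, ?_⟩
      have h1 : (u * m + v * (p : ℤ) ^ kk) • a = a := by rw [huv, one_smul]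
      have hz : ((p : ℤ) ^ kk) • a = 0 := by
        have : ((p : ℤ) ^ kk) • a = (p ^ kk : ℕ) • a := by
          rw [← natCast_zsmul]
          push_cast
          ring_nf
        rw [this, hkk]
      rw [add_smul, mul_smul, mul_smul, hz, smul_zero, add_zero] at h1
      exact h1
    constructor
    · -- left duals
      set L : AddSubgroup A :=
        { carrier := lDual φ₁ (H : Set A)
          zero_mem' := by
            intro h hh
            rw [duality_map_zero_s16 φ₁ hφ₁.2, AddChar.one_apply]
          add_mem' := by
            intro x y hx hy h hh
            rw [hφ₁.2, AddChar.mul_apply, hx h hh, hy h hh, mul_one]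
          neg_mem' := by
            intro x hx h hh
            have : φ₁ (-x) = (φ₁ x) ^ (-1 : ℤ) := by
              rw [← duality_map_zsmul φ₁ hφ₁.2 (-1 : ℤ) x, neg_smul, one_smul]
            rw [this, AddChar.zpow_apply, hx h hh, one_zpow] } with hLdef
      have hmemL : ∀ x, x ∈ lDual φ₁ (H : Set A) ↔ x ∈ L := fun x => Iff.rfl
      ext x
      constructor
      · intro hx
        have hmx : m • x ∈ L := by
          intro h hh
          have := hx h hh
          rwa [hφ x] at this
        obtain ⟨u, hu⟩ := bez x
        have : x ∈ L := by
          rw [← hu]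
          exact AddSubgroup.zsmul_mem L hmx u
        exact this
      · intro hx
        intro h hh
        rw [hφ x]
        exact (AddSubgroup.zsmul_mem L (hmemL x |>.mp hx) m) h hh
    · -- right duals
      ext x
      constructor
      · intro hx h hh
        obtain ⟨u, hu⟩ := bez h
        have h1 : u • h ∈ H := AddSubgroup.zsmul_mem H hh u
        have h2 : φ₂ (u • h) x = 1 := hx _ h1
        have h3 : φ₂ (u • h) = φ₁ h := by
          rw [hφ (u • h)]
          congr 1
          rw [smul_comm] at hu
          exact hu
        rwa [h3] at h2
      · intro hx h hh
        rw [hφ h]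
        exact hx _ (AddSubgroup.zsmul_mem H hh m)
end
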